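/- arXiv:2001.01475 — 3 statements merged into one kernel-verified Lean document; each statement's English description precedes it below -/
import Mathlib

section
/- Let n ≥ 1, s ∈ (0,1/2), Ω ⊂ ℝⁿ a bounded domain, and W a double-well potential. Suppose u_ε ∈ X converges to u in L¹_loc(ℝⁿ) as ε → 0⁺ and liminf_{ε→0⁺} F^int_ε(u_ε,Ω) < +∞. Then u(x) ∈ {−1, 1} for almost every x ∈ Ω, i.e. u = χ_E − χ_{ℝⁿ∖E} a.e. in Ω for some measurable set E ⊂ ℝⁿ, and moreover liminf_{ε→0⁺} F^int_ε(u_ε,Ω) ≥ Per_s^int(E,Ω). -/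
open MeasureTheory Filter Topology Metric Set
open scoped ENNReal NNReal RealInnerProductSpace

noncomputable section

/-- `ℝⁿ` with the Euclidean structure. -/
abbrev Rn (n : ℕ) := EuclideanSpace ℝ (Fin n)

/-- A double-well potential with wells at `±1`. -/
def DoubleWell (W : ℝ → ℝ) : Prop :=
  ContDiff ℝ 2 W ∧ (∀ t, 0 ≤ W t) ∧ W 1 = 0 ∧ W (-1) = 0 ∧
    (∀ t, t ≠ 1 → t ≠ -1 → 0 < W t) ∧
    deriv W 1 = 0 ∧ deriv W (-1) = 0 ∧
    0 < iteratedDeriv 2 W 1 ∧ 0 < iteratedDeriv 2 W (-1)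

/-- Membership in `X = {u ∈ L^∞(ℝⁿ) : ‖u‖_∞ ≤ 1}`. -/
def memX (n : ℕ) (u : Rn n → ℝ) : Prop :=
  Measurable u ∧ ∀ᵐ x ∂(volume : Measure (Rn n)), |u x| ≤ 1

/-- Convergence `u_ε → u₀` in `L¹_loc(ℝⁿ)` as `ε → 0⁺`. -/
def TendstoL1loc (n : ℕ) (u : ℝ → Rn n → ℝ) (u₀ : Rn n → ℝ) : Prop :=
  ∀ K : Set (Rn n), IsCompact K →
    Tendsto (fun ε => ∫⁻ x in K, ENNReal.ofReal |u ε x - u₀ x| ∂volume)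
      (𝓝[>] (0:ℝ)) (𝓝 0)

/-- Interior interaction kernel `K^int(u,Ω)`. -/
def Kint (n : ℕ) (s : ℝ) (u : Rn n → ℝ) (Ω : Set (Rn n)) : ℝ≥0∞ :=
  ∫⁻ x in Ω, ∫⁻ y in Ω, ENNReal.ofReal (|u x - u y| ^ 2 / ‖x - y‖ ^ ((n : ℝ) + 2 * s))

/-- Exterior interaction kernel `K^ext(u,Ω)`. -/
def Kext (n : ℕ) (s : ℝ) (u : Rn n → ℝ) (Ω : Set (Rn n)) : ℝ≥0∞ :=
  2 * ∫⁻ x in Ω, ∫⁻ y in Ωᶜ, ENNReal.ofReal (|u x - u y| ^ 2 / ‖x - y‖ ^ ((n : ℝ) + 2 * s))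

/-- Potential term `∫_Ω W(u)`. -/
def PotTerm (n : ℕ) (W : ℝ → ℝ) (u : Rn n → ℝ) (Ω : Set (Rn n)) : ℝ≥0∞ :=
  ∫⁻ x in Ω, ENNReal.ofReal (W (u x))

/-- `F^int_ε` for `s ∈ (0,1/2)`. -/
def Fint (n : ℕ) (s : ℝ) (W : ℝ → ℝ) (ε : ℝ) (u : Rn n → ℝ) (Ω : Set (Rn n)) : ℝ≥0∞ :=
  Kint n s u Ω + ENNReal.ofReal (ε ^ (-(2 * s)) / 2) * PotTerm n W u Ω

/-- `F^ext_ε` for `s ∈ (0,1/2)`. -/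
def Fext (n : ℕ) (s : ℝ) (W : ℝ → ℝ) (ε : ℝ) (u : Rn n → ℝ) (Ω : Set (Rn n)) : ℝ≥0∞ :=
  Kext n s u Ω + ENNReal.ofReal (ε ^ (-(2 * s)) / 2) * PotTerm n W u Ω

/-- Interaction functional `I_s(A,B)` between disjoint sets. -/
def Is (n : ℕ) (s : ℝ) (A B : Set (Rn n)) : ℝ≥0∞ :=
  ∫⁻ x in A, ∫⁻ y in B, ENNReal.ofReal (‖x - y‖ ^ (-((n : ℝ) + 2 * s)))

/-- Interior contribution of the fractional perimeter. -/
def PerSInt (n : ℕ) (s : ℝ) (E Ω : Set (Rn n)) : ℝ≥0∞ := Is n s (E ∩ Ω) (Ω \ E)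

/-- Exterior contribution of the fractional perimeter. -/
def PerSExt (n : ℕ) (s : ℝ) (E Ω : Set (Rn n)) : ℝ≥0∞ :=
  Is n s (E \ Ω) (Ω \ E) + Is n s (E ∩ Ω) (Ωᶜ \ E)

/-- Full fractional perimeter. -/
def PerS (n : ℕ) (s : ℝ) (E Ω : Set (Rn n)) : ℝ≥0∞ := PerSInt n s E Ω + PerSExt n s E Ω

/-- `u = χ_E − χ_{ℝⁿ∖E}` a.e. in `Ω`. -/
def phaseIn (n : ℕ) (u : Rn n → ℝ) (Ω E : Set (Rn n)) : Prop :=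
  ∀ᵐ x ∂(volume.restrict Ω), (x ∈ E → u x = 1) ∧ (x ∉ E → u x = -1)

/-- Γ-convergence, as `ε → 0⁺`, in the space `X` with the `L¹_loc` topology. -/
def GammaConvergesX (n : ℕ) (Fε : ℝ → (Rn n → ℝ) → ℝ≥0∞) (F : (Rn n → ℝ) → ℝ≥0∞) : Prop :=
  (∀ u : Rn n → ℝ, memX n u → ∀ uε : ℝ → Rn n → ℝ,
      (∀ ε ∈ Ioi (0:ℝ), memX n (uε ε)) → TendstoL1loc n uε u →
      F u ≤ liminf (fun ε => Fε ε (uε ε)) (𝓝[>] (0:ℝ))) ∧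
  (∀ u : Rn n → ℝ, memX n u → ∃ uε : ℝ → Rn n → ℝ,
      (∀ ε ∈ Ioi (0:ℝ), memX n (uε ε)) ∧ TendstoL1loc n uε u ∧
      limsup (fun ε => Fε ε (uε ε)) (𝓝[>] (0:ℝ)) ≤ F u)

/-- Divergence of a vector field on `ℝⁿ`. -/
def divg (n : ℕ) (φ : Rn n → Rn n) (x : Rn n) : ℝ :=
  ∑ i : Fin n, fderiv ℝ φ x (EuclideanSpace.single i (1:ℝ)) i

/-- Classical (distributional/De Giorgi) perimeter of `E` in the open set `Ω`:
the total variation of the distributional gradient of `χ_E` in `Ω`. -/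
def Per (n : ℕ) (E Ω : Set (Rn n)) : ℝ≥0∞ :=
  ⨆ (φ : Rn n → Rn n) (_ : ContDiff ℝ 1 φ) (_ : HasCompactSupport φ)
    (_ : tsupport φ ⊆ Ω) (_ : ∀ x, ‖φ x‖ ≤ 1),
    ENNReal.ofReal (∫ x in E, divg n φ x)

/-- `Ω` has Lipschitz boundary: near every boundary point, `Ω` is the subgraph
of a Lipschitz function in some direction. -/
def HasLipschitzBoundary (n : ℕ) (Ω : Set (Rn n)) : Prop :=
  ∀ x ∈ frontier Ω, ∃ r > (0:ℝ), ∃ v : Rn n, ‖v‖ = 1 ∧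
    ∃ (L : ℝ≥0) (f : Rn n → ℝ), LipschitzWith L f ∧
      Ω ∩ ball x r = {y ∈ ball x r | ⟪y, v⟫ < f (y - ⟪y, v⟫ • v)}

/-- The reduced boundary `∂*E` (identified, as usual up to an `H^{n-1}`-negligible set,
with the measure-theoretic boundary: points where the density of `E` is neither 0 nor 1). -/
def reducedBoundary (n : ℕ) (E : Set (Rn n)) : Set (Rn n) :=
  {x : Rn n |
    ¬ Tendsto (fun r : ℝ => volume (E ∩ ball x r) / volume (ball x r)) (𝓝[>] 0) (𝓝 0) ∧
    ¬ Tendsto (fun r : ℝ => volume (E ∩ ball x r) / volume (ball x r)) (𝓝[>] 0) (𝓝 1)}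

/-- `ω_m`: Lebesgue measure of the unit ball of `ℝ^m`. -/
def omegaBall (m : ℕ) : ℝ≥0∞ := volume (ball (0 : EuclideanSpace ℝ (Fin m)) 1)

/-- Dirichlet energy `∫_Ω |∇u|²`. -/
def Dirichlet (n : ℕ) (u : Rn n → ℝ) (Ω : Set (Rn n)) : ℝ≥0∞ :=
  ∫⁻ x in Ω, ENNReal.ofReal (‖gradient u x‖ ^ 2)

/-- Allen–Cahn energy `F₁(u,Ω) = ∫_Ω |∇u|² + ∫_Ω W(u)`. -/
def AC (n : ℕ) (W : ℝ → ℝ) (u : Rn n → ℝ) (Ω : Set (Rn n)) : ℝ≥0∞ :=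
  Dirichlet n u Ω + PotTerm n W u Ω

/-- Full nonlocal kernel `K(u,Ω) = K^int + K^ext`. -/
def Kfull (n : ℕ) (s : ℝ) (u : Rn n → ℝ) (Ω : Set (Rn n)) : ℝ≥0∞ :=
  Kint n s u Ω + Kext n s u Ω

/-- Fractional Allen–Cahn energy `F₁(u,Ω) = K(u,Ω) + ∫_Ω W(u)`. -/
def FracAC (n : ℕ) (s : ℝ) (W : ℝ → ℝ) (u : Rn n → ℝ) (Ω : Set (Rn n)) : ℝ≥0∞ :=
  Kfull n s u Ω + PotTerm n W u Ω

/-- `F^int_ε` for `s ∈ [1/2,1)` (with the logarithmic scaling at `s = 1/2`). -/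
def FintH (n : ℕ) (s : ℝ) (W : ℝ → ℝ) (ε : ℝ) (u : Rn n → ℝ) (Ω : Set (Rn n)) : ℝ≥0∞ :=
  if s = (1/2 : ℝ) then
    ENNReal.ofReal |Real.log ε|⁻¹ * Kint n s u Ω
      + ENNReal.ofReal (|ε * Real.log ε|⁻¹ / 2) * PotTerm n W u Ω
  else
    ENNReal.ofReal (ε ^ (2 * s - 1)) * Kint n s u Ω
      + ENNReal.ofReal (ε⁻¹ / 2) * PotTerm n W u Ω

/-- `F^ext_ε` for `s ∈ [1/2,1)`. -/
def FextH (n : ℕ) (s : ℝ) (W : ℝ → ℝ) (ε : ℝ) (u : Rn n → ℝ) (Ω : Set (Rn n)) : ℝ≥0∞ :=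
  if s = (1/2 : ℝ) then
    ENNReal.ofReal |Real.log ε|⁻¹ * Kext n s u Ω
      + ENNReal.ofReal (|ε * Real.log ε|⁻¹ / 2) * PotTerm n W u Ω
  else
    ENNReal.ofReal (ε ^ (2 * s - 1)) * Kext n s u Ω
      + ENNReal.ofReal (ε⁻¹ / 2) * PotTerm n W u Ω

/-- `F_ε = F^int_ε + F^ext_ε` for `s ∈ [1/2,1)`. -/
def FH (n : ℕ) (s : ℝ) (W : ℝ → ℝ) (ε : ℝ) (u : Rn n → ℝ) (Ω : Set (Rn n)) : ℝ≥0∞ :=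
  FintH n s W ε u Ω + FextH n s W ε u Ω



private lemma measurable_kintegrand (n : ℕ) (s : ℝ) (hs : 0 < s) {v : Rn n → ℝ}
    (hv : Measurable v) :
    Measurable (fun p : Rn n × Rn n =>
      ENNReal.ofReal (|v p.1 - v p.2| ^ 2 / ‖p.1 - p.2‖ ^ ((n : ℝ) + 2 * s))) := by
  have h1 : Measurable (fun p : Rn n × Rn n => |v p.1 - v p.2| ^ 2) :=
    (((hv.comp measurable_fst).sub (hv.comp measurable_snd)).abs).pow_const 2
  have h2 : Continuous (fun p : Rn n × Rn n => ‖p.1 - p.2‖ ^ ((n : ℝ) + 2 * s)) :=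
    (Real.continuous_rpow_const (by positivity)).comp (continuous_fst.sub continuous_snd).norm
  exact (h1.div h2.measurable).ennreal_ofReal

private lemma kint_eq_prod (n : ℕ) (s : ℝ) (hs : 0 < s) (Ω : Set (Rn n)) {v : Rn n → ℝ}
    (hv : Measurable v) :
    Kint n s v Ω = ∫⁻ p : Rn n × Rn n,
      ENNReal.ofReal (|v p.1 - v p.2| ^ 2 / ‖p.1 - p.2‖ ^ ((n : ℝ) + 2 * s))
      ∂((volume.restrict Ω).prod (volume.restrict Ω)) :=
  (MeasureTheory.lintegral_prod _ (measurable_kintegrand n s hs hv).aemeasurable).symm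

/-- For `s ∈ (0,1/2)`, a bounded domain `Ω`, a double-well potential `W`:
if `u_ε ∈ X` converges to `u` in `L¹_loc(ℝⁿ)` as `ε → 0⁺` and
`liminf_{ε→0⁺} F^int_ε(u_ε,Ω) < +∞`, then `u ∈ {−1,1}` a.e. in `Ω`, i.e.
`u = χ_E − χ_{ℝⁿ∖E}` a.e. in `Ω` for some measurable `E`, and moreover
`liminf_{ε→0⁺} F^int_ε(u_ε,Ω) ≥ Per_s^int(E,Ω)`. -/
theorem liminf_Fint_ge_perSInt
    (n : ℕ) (hn : 1 ≤ n) (s : ℝ) (hs : s ∈ Set.Ioo (0:ℝ) (1/2))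
    (Ω : Set (Rn n)) (hΩo : IsOpen Ω) (hΩconn : IsConnected Ω)
    (hΩb : Bornology.IsBounded Ω)
    (W : ℝ → ℝ) (hW : DoubleWell W)
    (u : Rn n → ℝ) (hu : memX n u)
    (uε : ℝ → Rn n → ℝ) (huε : ∀ ε ∈ Set.Ioi (0:ℝ), memX n (uε ε))
    (hconv : TendstoL1loc n uε u)
    (hfin : liminf (fun ε => Fint n s W ε (uε ε) Ω) (𝓝[>] (0:ℝ)) < ⊤) :
    ∃ E : Set (Rn n), MeasurableSet E ∧ phaseIn n u Ω E ∧
      PerSInt n s E Ω ≤ liminf (fun ε => Fint n s W ε (uε ε) Ω) (𝓝[>] (0:ℝ)) := by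
  classical
  set F : ℝ → ℝ≥0∞ := fun ε => Fint n s W ε (uε ε) Ω with hFdef
  set L : ℝ≥0∞ := liminf F (𝓝[>] (0:ℝ)) with hLdef
  obtain ⟨hs0, hs12⟩ := hs
  have h2s : (0:ℝ) < 2 * s := by linarith
  -- Step 1: choose a sequence ε k → 0⁺ with F (ε k) < L + 1/(k+1)
  have hchoice : ∀ k : ℕ, ∃ ee : ℝ, 0 < ee ∧ ee < 1/(k+1) ∧ F ee < L + ((k:ℝ≥0∞)+1)⁻¹ := by
    intro k
    have hlt : L < L + ((k:ℝ≥0∞)+1)⁻¹ :=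
      ENNReal.lt_add_right hfin.ne
        (ENNReal.inv_ne_zero.2 (ENNReal.add_ne_top.2 ⟨ENNReal.natCast_ne_top k, ENNReal.one_ne_top⟩))
    have hfreq : ∃ᶠ ee in 𝓝[>] (0:ℝ), F ee < L + ((k:ℝ≥0∞)+1)⁻¹ :=
      frequently_lt_of_liminf_lt (by isBoundedDefault) hlt
    have hpos : (0:ℝ) < 1/(k+1) := by positivity
    have hev1 : ∀ᶠ ee : ℝ in 𝓝[>] (0:ℝ), ee < 1/(k+1) :=
      (gt_mem_nhds hpos).filter_mono nhdsWithin_le_nhds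
    have hev2 : ∀ᶠ ee in 𝓝[>] (0:ℝ), (0:ℝ) < ee := eventually_mem_nhdsWithin
    obtain ⟨ee, h1, h2, h3⟩ := (hfreq.and_eventually (hev1.and hev2)).exists
    exact ⟨ee, h3, h2, h1⟩
  choose e he0 he1 heF using hchoice
  have heT : Tendsto e atTop (𝓝 (0:ℝ)) :=
    tendsto_of_tendsto_of_tendsto_of_le_of_le tendsto_const_nhds
      tendsto_one_div_add_atTop_nhds_zero_nat (fun k => (he0 k).le) (fun k => (he1 k).le)
  have heI : Tendsto e atTop (𝓝[>] (0:ℝ)) :=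
    tendsto_nhdsWithin_of_tendsto_nhds_of_eventually_within _ heT
      (Eventually.of_forall fun k => he0 k)
  -- Step 2: a.e. convergent subsequence on closure Ω
  have hK : IsCompact (closure Ω) := hΩb.isCompact_closure
  set μK : Measure (Rn n) := volume.restrict (closure Ω) with hμK
  set μΩ : Measure (Rn n) := volume.restrict Ω with hμΩ
  have hμle : μΩ ≤ μK := Measure.restrict_mono subset_closure le_rfl
  have hmeask : ∀ k, Measurable (uε (e k)) := fun k => (huε (e k) (he0 k)).1
  have hL1 : Tendsto (fun k => eLpNorm (uε (e k) - u) 1 μK) atTop (𝓝 0) := by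
    have h := (hconv (closure Ω) hK).comp heI
    refine Tendsto.congr (fun k => ?_) h
    rw [eLpNorm_one_eq_lintegral_enorm]
    exact (lintegral_congr fun x => by
      rw [Pi.sub_apply, Real.enorm_eq_ofReal_abs]).symm
  have htm : TendstoInMeasure μK (fun k => uε (e k)) atTop u :=
    tendstoInMeasure_of_tendsto_eLpNorm one_ne_zero
      (fun k => (hmeask k).aestronglyMeasurable) hu.1.aestronglyMeasurable hL1
  obtain ⟨ns, hns, haeK⟩ := htm.exists_seq_tendsto_ae
  set δ : ℕ → ℝ := fun k => e (ns k) with hδdef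
  have hδ0 : ∀ k, 0 < δ k := fun k => he0 (ns k)
  have hδmeas : ∀ k, Measurable (uε (δ k)) := fun k => hmeask (ns k)
  have hδ1 : ∀ k, δ k < 1/(k+1) := by
    intro k
    refine lt_of_lt_of_le (he1 (ns k)) ?_
    have hk : (k:ℝ) ≤ (ns k : ℝ) := Nat.cast_le.2 hns.le_apply
    exact one_div_le_one_div_of_le (by positivity) (by linarith)
  have hδT : Tendsto δ atTop (𝓝 (0:ℝ)) :=
    tendsto_of_tendsto_of_tendsto_of_le_of_le tendsto_const_nhds
      tendsto_one_div_add_atTop_nhds_zero_nat (fun k => (hδ0 k).le) (fun k => (hδ1 k).le)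
  have hδF : ∀ k, F (δ k) ≤ L + ((k:ℝ≥0∞)+1)⁻¹ := by
    intro k
    refine le_trans (heF (ns k)).le (add_le_add le_rfl ?_)
    exact ENNReal.inv_le_inv.2 (add_le_add (Nat.cast_le.2 hns.le_apply) le_rfl)
  have haeΩ : ∀ᵐ x ∂μΩ, Tendsto (fun k => uε (δ k) x) atTop (𝓝 (u x)) :=
    Filter.Eventually.filter_mono (ae_mono hμle) haeK
  -- liminf of F (δ k) over ℕ is ≤ L
  have hinv0 : Tendsto (fun k : ℕ => ((k:ℝ≥0∞)+1)⁻¹) atTop (𝓝 0) := by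
    have h := ENNReal.tendsto_inv_nat_nhds_zero.comp (tendsto_add_atTop_nat 1)
    refine Tendsto.congr (fun k => ?_) h
    simp [Function.comp]
  have hliminfδ : liminf (fun k => F (δ k)) atTop ≤ L := by
    calc liminf (fun k => F (δ k)) atTop
        ≤ liminf (fun k : ℕ => L + ((k:ℝ≥0∞)+1)⁻¹) atTop :=
          liminf_le_liminf (Eventually.of_forall hδF)
      _ = L := Tendsto.liminf_eq (by simpa using Tendsto.const_add L hinv0)
  -- Step 3: PotTerm → 0
  have hFbd : ∀ k, F (δ k) ≤ L + 1 := fun k =>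
    le_trans (hδF k) (add_le_add le_rfl (ENNReal.inv_le_one.2 le_add_self))
  have hLtop : L + 1 ≠ ⊤ := ENNReal.add_ne_top.2 ⟨hfin.ne, ENNReal.one_ne_top⟩
  have hPotbd : ∀ k, PotTerm n W (uε (δ k)) Ω ≤ (L+1) * ENNReal.ofReal (2 * (δ k) ^ (2*s)) := by
    intro k
    set c : ℝ≥0∞ := ENNReal.ofReal ((δ k) ^ (-(2*s)) / 2) with hcdef
    have hrpos : (0:ℝ) < (δ k) ^ (2*s) := Real.rpow_pos_of_pos (hδ0 k) _
    have hc0 : c ≠ 0 :=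
      (ENNReal.ofReal_pos.2 (div_pos (Real.rpow_pos_of_pos (hδ0 k) _) two_pos)).ne'
    have hctop : c ≠ ⊤ := ENNReal.ofReal_ne_top
    have hcinv : c⁻¹ = ENNReal.ofReal (2 * (δ k) ^ (2*s)) := by
      have hre : ((δ k) ^ (-(2*s)) / 2) = (2 * (δ k) ^ (2*s))⁻¹ := by
        rw [Real.rpow_neg (hδ0 k).le]
        field_simp
      rw [hcdef, hre, ENNReal.ofReal_inv_of_pos (by positivity), inv_inv]
    have hmul : c * PotTerm n W (uε (δ k)) Ω ≤ L + 1 := le_trans le_add_self (hFbd k)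
    calc PotTerm n W (uε (δ k)) Ω
        = c⁻¹ * (c * PotTerm n W (uε (δ k)) Ω) := by
          rw [← mul_assoc, ENNReal.inv_mul_cancel hc0 hctop, one_mul]
      _ ≤ c⁻¹ * (L + 1) := mul_le_mul' le_rfl hmul
      _ = (L+1) * ENNReal.ofReal (2 * (δ k) ^ (2*s)) := by rw [hcinv, mul_comm]
  have hPot0 : Tendsto (fun k => PotTerm n W (uε (δ k)) Ω) atTop (𝓝 0) := by
    have h1 : Tendsto (fun k => (δ k) ^ (2*s)) atTop (𝓝 0) := by
      have h := ((Real.continuousAt_rpow_const 0 (2*s) (Or.inr h2s.le)).tendsto).comp hδT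
      simpa [Function.comp_def, Real.zero_rpow h2s.ne'] using h
    have h2 : Tendsto (fun k => ENNReal.ofReal (2 * (δ k) ^ (2*s))) atTop (𝓝 0) := by
      have h := ENNReal.tendsto_ofReal (h1.const_mul 2)
      simpa using h
    have h3 : Tendsto (fun k => (L+1) * ENNReal.ofReal (2 * (δ k) ^ (2*s))) atTop (𝓝 0) := by
      simpa using ENNReal.Tendsto.const_mul h2 (Or.inr hLtop)
    exact tendsto_of_tendsto_of_tendsto_of_le_of_le tendsto_const_nhds h3
      (fun k => zero_le) hPotbd
  -- Step 4: W(u) = 0 a.e. on Ω, hence u ∈ {±1} a.e.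
  have hWcont : Continuous W := hW.1.continuous
  have hval : ∀ᵐ x ∂μΩ, u x = 1 ∨ u x = -1 := by
    have hWm : ∀ k : ℕ, Measurable fun x => ENNReal.ofReal (W (uε (δ k) x)) :=
      fun k => (hWcont.measurable.comp (hδmeas k)).ennreal_ofReal
    have hconv2 : ∀ᵐ x ∂μΩ,
        liminf (fun k => ENNReal.ofReal (W (uε (δ k) x))) atTop = ENNReal.ofReal (W (u x)) := by
      filter_upwards [haeΩ] with x hx
      exact (ENNReal.tendsto_ofReal ((hWcont.tendsto _).comp hx)).liminf_eq
    have hle : ∫⁻ x, ENNReal.ofReal (W (u x)) ∂μΩ = 0 := by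
      have h1 : ∫⁻ x, ENNReal.ofReal (W (u x)) ∂μΩ
          ≤ liminf (fun k => ∫⁻ x, ENNReal.ofReal (W (uε (δ k) x)) ∂μΩ) atTop := by
        rw [← lintegral_congr_ae hconv2]
        exact lintegral_liminf_le hWm
      have h2 : liminf (fun k => ∫⁻ x, ENNReal.ofReal (W (uε (δ k) x)) ∂μΩ) atTop = 0 :=
        hPot0.liminf_eq
      exact le_antisymm (h1.trans_eq h2) zero_le
    have h0 := (lintegral_eq_zero_iff
      ((hWcont.measurable.comp hu.1).ennreal_ofReal)).1 hle
    filter_upwards [h0] with x hx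
    have hW0 : W (u x) = 0 := by
      have hx' : ENNReal.ofReal (W (u x)) = 0 := hx
      have h1 : W (u x) ≤ 0 := by
        by_contra h
        exact (ENNReal.ofReal_pos.2 (lt_of_not_ge h)).ne' hx'
      exact le_antisymm h1 (hW.2.1 _)
    by_contra h
    push_neg at h
    exact (hW.2.2.2.2.1 _ h.1 h.2).ne' hW0
  -- the set E
  set E : Set (Rn n) := u ⁻¹' {1} with hEdef
  have hE : MeasurableSet E := hu.1 (measurableSet_singleton 1)
  -- Step 5: lower semicontinuity of Kint
  have hKfatou : Kint n s u Ω ≤ L := by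
    set g : Rn n × Rn n → ℝ≥0∞ := fun p =>
      ENNReal.ofReal (|u p.1 - u p.2| ^ 2 / ‖p.1 - p.2‖ ^ ((n:ℝ) + 2*s)) with hg
    set gk : ℕ → Rn n × Rn n → ℝ≥0∞ := fun k p =>
      ENNReal.ofReal (|uε (δ k) p.1 - uε (δ k) p.2| ^ 2 / ‖p.1 - p.2‖ ^ ((n:ℝ) + 2*s)) with hgk
    have hgkm : ∀ k, Measurable (gk k) := fun k => measurable_kintegrand n s hs0 (hδmeas k)
    set S : Set (Rn n) := {x | Tendsto (fun k => uε (δ k) x) atTop (𝓝 (u x))} with hS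
    have hSc : μΩ Sᶜ = 0 := haeΩ
    have hprodae : ∀ᵐ p ∂(μΩ.prod μΩ), Tendsto (fun k => gk k p) atTop (𝓝 (g p)) := by
      have hnull : (μΩ.prod μΩ) ((S ×ˢ S)ᶜ) = 0 := by
        rw [Set.compl_prod_eq_union]
        refine measure_union_null ?_ ?_
        · rw [Measure.prod_prod, hSc, zero_mul]
        · rw [Measure.prod_prod, hSc, mul_zero]
      rw [ae_iff]
      refine measure_mono_null ?_ hnull
      intro p hp
      simp only [mem_setOf_eq] at hp
      intro hmem
      exact hp (ENNReal.tendsto_ofReal (((hmem.1.sub hmem.2).abs.pow 2).div_const _))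
    calc Kint n s u Ω = ∫⁻ p, g p ∂(μΩ.prod μΩ) := kint_eq_prod n s hs0 Ω hu.1
      _ = ∫⁻ p, liminf (fun k => gk k p) atTop ∂(μΩ.prod μΩ) :=
          lintegral_congr_ae (by
            filter_upwards [hprodae] with p hp
            exact hp.liminf_eq.symm)
      _ ≤ liminf (fun k => ∫⁻ p, gk k p ∂(μΩ.prod μΩ)) atTop := lintegral_liminf_le hgkm
      _ = liminf (fun k => Kint n s (uε (δ k)) Ω) atTop := by
          refine congrArg (fun f => liminf f atTop) ?_
          funext k
          exact (kint_eq_prod n s hs0 Ω (hδmeas k)).symm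
      _ ≤ liminf (fun k => F (δ k)) atTop :=
          liminf_le_liminf (Eventually.of_forall fun k => le_self_add)
      _ ≤ L := hliminfδ
  -- Step 6: PerSInt E Ω ≤ Kint u Ω
  have hPer : PerSInt n s E Ω ≤ Kint n s u Ω := by
    have hyae : ∀ᵐ y ∂(volume.restrict (Ω \ E)), u y = -1 := by
      have h1 : ∀ᵐ y ∂(volume.restrict (Ω \ E)), u y = 1 ∨ u y = -1 :=
        Filter.Eventually.filter_mono
          (ae_mono (Measure.restrict_mono diff_subset le_rfl)) hval
      have h2 := ae_restrict_mem (μ := (volume : Measure (Rn n))) (hΩo.measurableSet.diff hE)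
      filter_upwards [h1, h2] with y hy1 hy2
      rcases hy1 with h | h
      · exact absurd h hy2.2
      · exact h
    have hinner : ∀ x : Rn n, u x = 1 →
        (∫⁻ y in Ω \ E, ENNReal.ofReal (‖x - y‖ ^ (-((n:ℝ) + 2*s)))) ≤
        ∫⁻ y in Ω, ENNReal.ofReal (|u x - u y| ^ 2 / ‖x - y‖ ^ ((n:ℝ) + 2*s)) := by
      intro x hx
      refine le_trans (lintegral_mono_ae ?_)
        (lintegral_mono' (Measure.restrict_mono diff_subset le_rfl) le_rfl)
      filter_upwards [hyae] with y hy
      rw [hx, hy]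
      have h4 : |(1:ℝ) - (-1)| ^ 2 = 4 := by norm_num
      rw [h4, Real.rpow_neg (norm_nonneg _)]
      refine ENNReal.ofReal_le_ofReal ?_
      rw [div_eq_mul_inv]
      have hnn : (0:ℝ) ≤ (‖x - y‖ ^ ((n:ℝ)+2*s))⁻¹ :=
        inv_nonneg.2 (Real.rpow_nonneg (norm_nonneg (x - y)) _)
      linarith
    have hx2 := ae_restrict_mem (μ := (volume : Measure (Rn n))) (hE.inter hΩo.measurableSet)
    calc PerSInt n s E Ω
        = ∫⁻ x in E ∩ Ω, ∫⁻ y in Ω \ E, ENNReal.ofReal (‖x - y‖ ^ (-((n:ℝ) + 2*s))) := rfl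
      _ ≤ ∫⁻ x in E ∩ Ω, ∫⁻ y in Ω,
            ENNReal.ofReal (|u x - u y| ^ 2 / ‖x - y‖ ^ ((n:ℝ)+2*s)) := by
          refine lintegral_mono_ae ?_
          filter_upwards [hx2] with x hx
          exact hinner x hx.1
      _ ≤ Kint n s u Ω :=
          lintegral_mono' (Measure.restrict_mono inter_subset_right le_rfl) le_rfl
  refine ⟨E, hE, ?_, hPer.trans hKfatou⟩
  filter_upwards [hval] with x hx
  refine ⟨fun hxE => hxE, fun hxE => ?_⟩
  rcases hx with h | h
  · exact absurd h hxE
  · exact h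


end
end

section
/- Let n ≥ 1, s ∈ [1/2,1), Ω ⊂ ℝⁿ a bounded domain with Lipschitz boundary, and W a double-well potential. For every u ∈ X such that u = χ_E − χ_{ℝⁿ∖E} a.e. in Ω for some set E of finite perimeter in Ω, there exists a family u_ε converging to u in L¹_loc(ℝⁿ) such that lim_{ε→0⁺} F^ext_ε(u_ε,Ω) = 0; in other words, the exterior nonlocal interactions disappear in the Γ-limit in the weakly nonlocal regime s ∈ [1/2,1). -/
open MeasureTheory Filter Topology Metric Set
open scoped ENNReal NNReal RealInnerProductSpace

noncomputable section

/-- If `x ∈ Ω` (open) and `y ∉ Ω`, the segment from `x` to `y` meets the frontier. -/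
private lemma segment_crossing {n : ℕ} {Ω : Set (Rn n)} (hΩo : IsOpen Ω)
    {x y : Rn n} (hx : x ∈ Ω) (hy : y ∉ Ω) :
    ∃ z ∈ frontier Ω, dist x z ≤ dist x y ∧ dist y z ≤ dist x y := by
  have hseg : IsPreconnected (segment ℝ x y) := (convex_segment x y).isPreconnected
  have hz : ∃ z ∈ segment ℝ x y, z ∈ frontier Ω := by
    by_cases hyc : y ∈ closure Ω
    · exact ⟨y, right_mem_segment ℝ x y, by
        rw [frontier, hΩo.interior_eq]; exact ⟨hyc, hy⟩⟩
    · by_contra h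
      push_neg at h
      have hcover : segment ℝ x y ⊆ Ω ∪ (closure Ω)ᶜ := by
        intro z hzs
        rcases em (z ∈ closure Ω) with hzc | hzc
        · left
          have hzf : z ∉ frontier Ω := h z hzs
          rw [frontier, hΩo.interior_eq] at hzf
          by_contra hzΩ
          exact hzf ⟨hzc, hzΩ⟩
        · right; exact hzc
      obtain ⟨z, _, hzΩ, hzc⟩ := hseg Ω (closure Ω)ᶜ hΩo isClosed_closure.isOpen_compl
        hcover ⟨x, left_mem_segment ℝ x y, hx⟩
        ⟨y, right_mem_segment ℝ x y, hyc⟩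
      exact hzc (subset_closure hzΩ)
  obtain ⟨z, hzs, hzf⟩ := hz
  have hsum := dist_add_dist_of_mem_segment hzs
  have h1 : dist z y = dist y z := dist_comm z y
  refine ⟨z, hzf, by linarith [dist_nonneg (x := z) (y := y)],
    by linarith [dist_nonneg (x := x) (y := z)]⟩

/-- A Lipschitz-type graph `{⟪y,v⟫ = f(y - ⟪y,v⟫ v)}` is Lebesgue-null in any ball. -/
private lemma graph_null {n : ℕ} (v : Rn n) (hv : ‖v‖ = 1) (f : Rn n → ℝ)
    (hf : Continuous f) (x : Rn n) (r : ℝ) :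
    volume ({y : Rn n | ⟪y, v⟫ = f (y - ⟪y, v⟫ • v)} ∩ ball x r) = 0 := by
  set g : Rn n → ℝ := fun y => ⟪y, v⟫ - f (y - ⟪y, v⟫ • v) with hg
  have h1 : Continuous fun y : Rn n => ⟪y, v⟫ := continuous_id.inner continuous_const
  have h2 : Continuous fun y : Rn n => y - ⟪y, v⟫ • v :=
    continuous_id.sub (h1.smul continuous_const)
  have hgc : Continuous g := h1.sub (hf.comp h2)
  have hvv : ⟪v, v⟫ = (1 : ℝ) := by
    rw [real_inner_self_eq_norm_mul_norm, hv]; ring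
  have hkey : ∀ (y : Rn n) (t : ℝ), g (y + t • v) = g y + t := by
    intro y t
    have hi : ⟪y + t • v, v⟫ = ⟪y, v⟫ + t := by
      rw [inner_add_left, real_inner_smul_left, hvv, mul_one]
    show ⟪y + t • v, v⟫ - f (y + t • v - ⟪y + t • v, v⟫ • v) = (⟪y, v⟫ - f _) + t
    rw [hi]
    have h3 : y + t • v - (⟪y, v⟫ + t) • v = y - ⟪y, v⟫ • v := by
      rw [add_smul]; abel
    rw [h3]; ring
  set A : Set (Rn n) := {y : Rn n | g y = 0} ∩ ball x r with hA
  have hAset : {y : Rn n | ⟪y, v⟫ = f (y - ⟪y, v⟫ • v)} ∩ ball x r = A := by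
    rw [hA]; congr 1; ext y; simp [hg, sub_eq_zero]
  rw [hAset]
  have hAm : MeasurableSet A :=
    ((isClosed_eq hgc continuous_const).measurableSet).inter measurableSet_ball
  set T : ℕ → Set (Rn n) := fun k => (fun z => z + ((k : ℝ) + 1)⁻¹ • v) ⁻¹' A with hT
  have hTm : ∀ k, MeasurableSet (T k) := fun k =>
    hAm.preimage ((continuous_id.add continuous_const).measurable)
  have hTd : Pairwise (Function.onFun Disjoint T) := by
    intro k j hkj
    rw [Function.onFun, Set.disjoint_left]
    intro z hzk hzj
    have e1 : g z + ((k : ℝ) + 1)⁻¹ = 0 := by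
      have h := hzk.1
      simp only [Set.mem_setOf_eq] at h
      rwa [hkey z] at h
    have e2 : g z + ((j : ℝ) + 1)⁻¹ = 0 := by
      have h := hzj.1
      simp only [Set.mem_setOf_eq] at h
      rwa [hkey z] at h
    have e3 : ((k : ℝ) + 1)⁻¹ = ((j : ℝ) + 1)⁻¹ := by linarith
    have e4 : ((k : ℝ) + 1) = ((j : ℝ) + 1) := inv_injective e3
    have e5 : (k : ℝ) = j := by linarith
    exact hkj (Nat.cast_injective e5)
  have hTsub : ∀ k, T k ⊆ ball x (r + 1) := by
    intro k z hz
    have hzb : z + ((k : ℝ) + 1)⁻¹ • v ∈ ball x r := hz.2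
    rw [mem_ball] at hzb ⊢
    have hd : dist z (z + ((k : ℝ) + 1)⁻¹ • v) ≤ 1 := by
      rw [dist_eq_norm]
      have : z - (z + ((k : ℝ) + 1)⁻¹ • v) = -(((k : ℝ) + 1)⁻¹ • v) := by abel
      rw [this, norm_neg, norm_smul, hv, mul_one, Real.norm_eq_abs]
      rw [abs_of_nonneg (by positivity)]
      rw [inv_le_one_iff₀]
      right; linarith [Nat.cast_nonneg (α := ℝ) k]
    calc dist z x ≤ dist z (z + ((k : ℝ) + 1)⁻¹ • v) + dist (z + ((k : ℝ) + 1)⁻¹ • v) x :=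
          dist_triangle _ _ _
      _ < 1 + r := by linarith
      _ = r + 1 := by ring
  have hvolT : ∀ k, volume (T k) = volume A := fun k =>
    measure_preimage_add_right volume _ A
  have hfin : volume (⋃ k, T k) < ⊤ :=
    lt_of_le_of_lt (measure_mono (iUnion_subset hTsub)) measure_ball_lt_top
  rw [measure_iUnion hTd hTm] at hfin
  simp only [hvolT] at hfin
  by_contra hA0
  rw [ENNReal.tsum_const_eq_top_of_ne_zero hA0] at hfin
  exact absurd hfin (lt_irrefl ⊤)

/-- The frontier of a bounded open set with Lipschitz boundary is Lebesgue-null. -/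
private lemma frontier_null {n : ℕ} {Ω : Set (Rn n)} (hΩo : IsOpen Ω)
    (hΩb : Bornology.IsBounded Ω) (hΩlip : HasLipschitzBoundary n Ω) :
    volume (frontier Ω) = 0 := by
  have hFc : IsCompact (frontier Ω) :=
    Metric.isCompact_of_isClosed_isBounded isClosed_frontier
      (hΩb.closure.subset frontier_subset_closure)
  have key : ∀ x ∈ frontier Ω, ∃ r > (0:ℝ), volume (frontier Ω ∩ ball x r) = 0 := by
    intro x hx
    obtain ⟨r, hr, v, hv, L, f, hfL, hset⟩ := hΩlip x hx
    refine ⟨r, hr, ?_⟩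
    have hgc1 : Continuous fun y : Rn n => ⟪y, v⟫ := continuous_id.inner continuous_const
    have hgc2 : Continuous fun y : Rn n => f (y - ⟪y, v⟫ • v) :=
      hfL.continuous.comp (continuous_id.sub (hgc1.smul continuous_const))
    have hsub : frontier Ω ∩ ball x r ⊆
        {y : Rn n | ⟪y, v⟫ = f (y - ⟪y, v⟫ • v)} ∩ ball x r := by
      rintro y ⟨hyf, hyb⟩
      refine ⟨?_, hyb⟩
      rcases lt_trichotomy (⟪y, v⟫) (f (y - ⟪y, v⟫ • v)) with hlt | heq | hgt
      · exfalso
        have hyΩ : y ∈ Ω ∩ ball x r := by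
          rw [hset]; exact ⟨hyb, hlt⟩
        have : y ∉ Ω := by
          rw [frontier, hΩo.interior_eq] at hyf
          exact hyf.2
        exact this hyΩ.1
      · exact heq
      · exfalso
        set U : Set (Rn n) := ball x r ∩ {z : Rn n | f (z - ⟪z, v⟫ • v) < ⟪z, v⟫} with hU
        have hUo : IsOpen U := isOpen_ball.inter (isOpen_lt hgc2 hgc1)
        have hyU : y ∈ U := ⟨hyb, hgt⟩
        have hUΩ : (U ∩ Ω) = ∅ := by
          ext z
          simp only [mem_inter_iff, mem_empty_iff_false, iff_false, not_and]
          rintro ⟨hzb, hzg⟩ hzΩ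
          have : z ∈ Ω ∩ ball x r := ⟨hzΩ, hzb⟩
          rw [hset] at this
          exact absurd this.2 (not_lt.2 hzg.le)
        have hyc : y ∈ closure Ω := frontier_subset_closure hyf
        rw [_root_.mem_closure_iff] at hyc
        obtain ⟨z, hz⟩ := hyc U hUo hyU
        rw [hUΩ] at hz
        exact hz
    exact measure_mono_null hsub (graph_null v hv f hfL.continuous x r)
  choose! r hrpos hrnull using key
  have hcov : frontier Ω ⊆ ⋃ x ∈ frontier Ω, ball x (r x) := fun y hy =>
    mem_biUnion hy (mem_ball_self (hrpos y hy))
  obtain ⟨t, hts, htfin, htcov⟩ := hFc.elim_finite_subcover_image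
    (fun x _ => isOpen_ball) hcov
  have hnull : volume (⋃ x ∈ t, frontier Ω ∩ ball x (r x)) = 0 :=
    (measure_biUnion_null_iff htfin.countable).2 fun x hx => hrnull x (hts hx)
  refine measure_mono_null ?_ hnull
  intro y hy
  obtain ⟨x, hxt, hyb⟩ := mem_iUnion₂.1 (htcov hy)
  exact mem_iUnion₂.2 ⟨x, hxt, hy, hyb⟩

set_option maxHeartbeats 2000000 in
/-- For `s ∈ [1/2,1)`, a bounded domain `Ω` with Lipschitz boundary and
a double-well potential `W`: for every `u ∈ X` with `u = χ_E − χ_{ℝⁿ∖E}` a.e. in `Ω` for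
some set `E` of finite perimeter in `Ω`, there is a family `u_ε → u` in `L¹_loc(ℝⁿ)`
with `lim_{ε→0⁺} F^ext_ε(u_ε,Ω) = 0`: the exterior nonlocal interactions disappear in
the Γ-limit in the weakly nonlocal regime. -/
theorem Fext_vanishes_weakly_nonlocal
    (n : ℕ) (hn : 1 ≤ n) (s : ℝ) (hs : s ∈ Set.Ico (1/2 : ℝ) 1)
    (Ω : Set (Rn n)) (hΩo : IsOpen Ω) (hΩconn : IsConnected Ω)
    (hΩb : Bornology.IsBounded Ω) (hΩlip : HasLipschitzBoundary n Ω)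
    (W : ℝ → ℝ) (hW : DoubleWell W)
    (u : Rn n → ℝ) (hu : memX n u)
    (E : Set (Rn n)) (hE : MeasurableSet E) (hphase : phaseIn n u Ω E)
    (hper : Per n E Ω < ⊤) :
    ∃ uε : ℝ → Rn n → ℝ, (∀ ε ∈ Set.Ioi (0:ℝ), memX n (uε ε)) ∧
      TendstoL1loc n uε u ∧
      Tendsto (fun ε => FextH n s W ε (uε ε) Ω) (𝓝[>] (0:ℝ)) (𝓝 0) := by
  obtain ⟨hs12, hs1⟩ := hs
  have hs0 : (0:ℝ) < s := lt_of_lt_of_le (by norm_num) hs12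
  -- frontier facts
  have hFnull : volume (frontier Ω) = 0 := frontier_null hΩo hΩb hΩlip
  have hFb : Bornology.IsBounded (frontier Ω) :=
    hΩb.closure.subset frontier_subset_closure
  obtain ⟨v0, hv0n⟩ : ∃ v0 : Rn n, ‖v0‖ = 1 := by
    refine ⟨EuclideanSpace.single (⟨0, hn⟩ : Fin n) (1:ℝ), ?_⟩
    rw [EuclideanSpace.norm_single]; norm_num
  obtain ⟨R, hR⟩ := (Metric.isBounded_iff_subset_closedBall 0).1 hΩb
  obtain ⟨x0, hx0⟩ := hΩconn.nonempty
  have hR0 : 0 ≤ R := le_trans dist_nonneg (hR hx0)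
  have hy0 : (R + 1) • v0 ∉ Ω := by
    intro hmem
    have h1 := hR hmem
    rw [mem_closedBall, dist_zero_right, norm_smul, hv0n, mul_one, Real.norm_eq_abs,
      abs_of_nonneg (by linarith)] at h1
    linarith
  have hFne : (frontier Ω).Nonempty := by
    obtain ⟨z, hz, -, -⟩ := segment_crossing hΩo hx0 hy0
    exact ⟨z, hz⟩
  have hΩvol : volume Ω < ⊤ :=
    lt_of_le_of_lt (measure_mono hR) measure_closedBall_lt_top
  -- the exponent and the integrable majorant
  set p : ℝ := (n:ℝ) + 2 * s with hp
  have hppos : (0:ℝ) < p := by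
    have := Nat.cast_nonneg (α := ℝ) n
    rw [hp]; nlinarith
  have hgBc : Continuous fun z : Rn n => (1 + ‖z‖) ^ (-p) :=
    (continuous_const.add continuous_norm).rpow_const (fun z => Or.inl (add_pos_of_pos_of_nonneg one_pos (norm_nonneg z)).ne')
  have hgB : Measurable fun z : Rn n => ENNReal.ofReal ((1 + ‖z‖) ^ (-p)) :=
    ENNReal.measurable_ofReal.comp hgBc.measurable
  set B : ℝ≥0∞ := ∫⁻ z : Rn n, ENNReal.ofReal ((1 + ‖z‖) ^ (-p)) with hBdef
  have hB : B < ⊤ := by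
    refine finite_integral_one_add_norm ?_
    have : Module.finrank ℝ (Rn n) = n := by
      simp [finrank_euclideanSpace]
    rw [this, hp]; nlinarith
  have htrans : ∀ x : Rn n,
      (∫⁻ y : Rn n, ENNReal.ofReal ((1 + ‖x - y‖) ^ (-p))) = B :=
    fun x => (Measure.measurePreserving_sub_left volume x).lintegral_comp hgB
  -- the scaling factor and collar width
  set c : ℝ → ℝ := fun ε => if s = 1/2 then |Real.log ε|⁻¹ else ε ^ (2 * s - 1) with hcdef
  set δ : ℝ → ℝ := fun ε => c ε ^ (1 / (2 * p)) with hδdef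
  have hctend : Tendsto c (𝓝[>] (0:ℝ)) (𝓝 0) := by
    rw [hcdef]
    by_cases h2 : s = 1/2
    · simp only [if_pos h2]
      exact tendsto_inv_atTop_zero.comp
        (tendsto_abs_atBot_atTop.comp Real.tendsto_log_nhdsGT_zero)
    · simp only [if_neg h2]
      have hpos : (0:ℝ) < 2 * s - 1 := by
        rcases lt_or_eq_of_le hs12 with h | h
        · linarith
        · exact absurd h.symm h2
      have h3 : ContinuousAt (fun t : ℝ => t ^ (2 * s - 1)) 0 :=
        Real.continuousAt_rpow_const 0 _ (Or.inr hpos.le)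
      have h4 := h3.tendsto
      rw [Real.zero_rpow hpos.ne'] at h4
      exact h4.mono_left nhdsWithin_le_nhds
  have hcev : ∀ᶠ ε in 𝓝[>] (0:ℝ), 0 < c ε ∧ c ε < 1 := by
    have hm : Set.Ioo (0:ℝ) (min 1 (Real.exp (-1))) ∈ 𝓝[>] (0:ℝ) :=
      Ioo_mem_nhdsGT_of_mem ⟨le_refl 0, lt_min one_pos (Real.exp_pos _)⟩
    filter_upwards [hm] with ε hε
    rw [hcdef]
    by_cases h2 : s = 1/2
    · simp only [if_pos h2]
      have h5 : Real.log ε < -1 := by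
        have h6 : ε < Real.exp (-1) := lt_of_lt_of_le hε.2 (min_le_right _ _)
        have h7 := Real.log_lt_log hε.1 h6
        rwa [Real.log_exp] at h7
      have h6 : 1 < |Real.log ε| := by
        rw [abs_of_neg (by linarith)]; linarith
      refine ⟨inv_pos.2 (by linarith), ?_⟩
      rw [inv_lt_one_iff₀]
      right; exact h6
    · simp only [if_neg h2]
      have hpos : (0:ℝ) < 2 * s - 1 := by
        rcases lt_or_eq_of_le hs12 with h | h
        · linarith
        · exact absurd h.symm h2
      exact ⟨Real.rpow_pos_of_pos hε.1 _,
        Real.rpow_lt_one hε.1.le (lt_of_lt_of_le hε.2 (min_le_left _ _)) hpos⟩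
  have hexp_pos : (0:ℝ) < 1 / (2 * p) := by positivity
  have hδtend0 : Tendsto δ (𝓝[>] (0:ℝ)) (𝓝 0) := by
    have h3 : ContinuousAt (fun t : ℝ => t ^ (1 / (2 * p))) 0 :=
      Real.continuousAt_rpow_const 0 _ (Or.inr hexp_pos.le)
    have h4 := h3.tendsto
    rw [Real.zero_rpow hexp_pos.ne'] at h4
    exact h4.comp hctend
  have hδev : ∀ᶠ ε in 𝓝[>] (0:ℝ), 0 < δ ε ∧ δ ε ≤ 1 := by
    filter_upwards [hcev] with ε hc
    exact ⟨Real.rpow_pos_of_pos hc.1 _, Real.rpow_le_one hc.1.le hc.2.le hexp_pos.le⟩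
  have hδtend : Tendsto δ (𝓝[>] (0:ℝ)) (𝓝[>] (0:ℝ)) :=
    tendsto_nhdsWithin_iff.2 ⟨hδtend0, hδev.mono fun ε h => h.1⟩
  have hthick : Tendsto (fun ε => volume (Metric.thickening (δ ε) (frontier Ω)))
      (𝓝[>] (0:ℝ)) (𝓝 0) := by
    have hfin1 : volume (Metric.thickening 1 (frontier Ω)) ≠ ⊤ := by
      obtain ⟨R', hR'⟩ := (Metric.isBounded_iff_subset_closedBall 0).1 hFb.thickening
      exact (lt_of_le_of_lt (measure_mono hR') measure_closedBall_lt_top).ne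
    have h1 := tendsto_measure_thickening_of_isClosed
      (μ := (volume : Measure (Rn n))) ⟨1, one_pos, hfin1⟩ isClosed_frontier
    rw [hFnull] at h1
    exact h1.comp hδtend
  -- the recovery family
  set uu : ℝ → Rn n → ℝ := fun ε x =>
    if Metric.infDist x (frontier Ω) < δ ε then 1 else max (-1) (min 1 (u x)) with huu
  have habs : ∀ ε x, |uu ε x| ≤ 1 := by
    intro ε x
    simp only [huu]
    split_ifs
    · norm_num
    · rw [abs_le]
      exact ⟨le_max_left _ _, max_le (by norm_num) (min_le_left _ _)⟩
  refine ⟨uu, ?_, ?_, ?_⟩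
  · -- membership in X
    intro ε hε
    constructor
    · refine Measurable.ite ?_ measurable_const
        (measurable_const.max (measurable_const.min hu.1))
      exact (isOpen_lt (continuous_infDist_pt _) continuous_const).measurableSet
    · exact ae_of_all _ (habs ε)
  · -- L¹loc convergence
    intro K hK
    have hbound : ∀ ε, (∫⁻ x in K, ENNReal.ofReal |uu ε x - u x| ∂volume)
        ≤ 2 * volume (Metric.thickening (δ ε) (frontier Ω)) := by
      intro ε
      have hae : ∀ᵐ x ∂(volume.restrict K), ENNReal.ofReal |uu ε x - u x| ≤
          (Metric.thickening (δ ε) (frontier Ω)).indicator (fun _ => (2:ℝ≥0∞)) x := by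
        filter_upwards [ae_restrict_of_ae hu.2] with x hx
        by_cases hcol : Metric.infDist x (frontier Ω) < δ ε
        · have hxth : x ∈ Metric.thickening (δ ε) (frontier Ω) :=
            (Metric.mem_thickening_iff_infDist_lt hFne).2 hcol
          rw [Set.indicator_of_mem hxth]
          have h1 : |uu ε x - u x| ≤ 2 := by
            have h2 := habs ε x
            have h3 := abs_sub (uu ε x) (u x)
            linarith
          exact le_trans (ENNReal.ofReal_le_ofReal h1) (by norm_num)
        · have h1 : uu ε x = u x := by
            simp only [huu, if_neg hcol]
            rw [min_eq_right (abs_le.1 hx).2, max_eq_right (abs_le.1 hx).1]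
          rw [h1, sub_self, abs_zero, ENNReal.ofReal_zero]
          exact zero_le
      calc (∫⁻ x in K, ENNReal.ofReal |uu ε x - u x| ∂volume)
          ≤ ∫⁻ x in K, (Metric.thickening (δ ε) (frontier Ω)).indicator
              (fun _ => (2:ℝ≥0∞)) x ∂volume := lintegral_mono_ae hae
        _ = 2 * (volume.restrict K) (Metric.thickening (δ ε) (frontier Ω)) :=
            lintegral_indicator_const Metric.isOpen_thickening.measurableSet 2
        _ ≤ 2 * volume (Metric.thickening (δ ε) (frontier Ω)) := by
            rw [Measure.restrict_apply Metric.isOpen_thickening.measurableSet]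
            exact mul_le_mul_right (measure_mono inter_subset_left) 2
    have hlim2 : Tendsto (fun ε => 2 * volume (Metric.thickening (δ ε) (frontier Ω)))
        (𝓝[>] (0:ℝ)) (𝓝 0) := by
      have := ENNReal.Tendsto.const_mul hthick (Or.inr (by norm_num : (2:ℝ≥0∞) ≠ ⊤))
      rwa [mul_zero] at this
    exact tendsto_of_tendsto_of_tendsto_of_le_of_le' tendsto_const_nhds hlim2
      (Eventually.of_forall fun ε => zero_le) (Eventually.of_forall hbound)
  · -- vanishing of the energy
    have hpot : ∀ ε, PotTerm n W (uu ε) Ω = 0 := by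
      intro ε
      have h0 : ∀ᵐ x ∂(volume.restrict Ω), ENNReal.ofReal (W (uu ε x)) = 0 := by
        filter_upwards [hphase] with x hx
        have hw : W (uu ε x) = 0 := by
          simp only [huu]
          split_ifs with h
          · exact hW.2.2.1
          · rcases em (x ∈ E) with hm | hm
            · rw [hx.1 hm]
              simpa using hW.2.2.1
            · rw [hx.2 hm]
              simpa using hW.2.2.2.1
        rw [hw, ENNReal.ofReal_zero]
      simp only [PotTerm]
      rw [lintegral_congr_ae h0, lintegral_zero]
    have hKb : ∀ ε, 0 < δ ε → δ ε ≤ 1 →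
        Kext n s (uu ε) Ω ≤ 2 * (ENNReal.ofReal (4 * (2 / δ ε) ^ p) * B * volume Ω) := by
      intro ε hδp hδ1
      have hinner : ∀ x ∈ Ω,
          (∫⁻ y in Ωᶜ, ENNReal.ofReal (|uu ε x - uu ε y| ^ 2 / ‖x - y‖ ^ p))
            ≤ ENNReal.ofReal (4 * (2 / δ ε) ^ p) * B := by
        intro x hx
        have hpt : ∀ y ∈ Ωᶜ, ENNReal.ofReal (|uu ε x - uu ε y| ^ 2 / ‖x - y‖ ^ p)
            ≤ ENNReal.ofReal (4 * (2 / δ ε) ^ p) *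
              ENNReal.ofReal ((1 + ‖x - y‖) ^ (-p)) := by
          intro y hy
          rw [← ENNReal.ofReal_mul (by positivity)]
          apply ENNReal.ofReal_le_ofReal
          by_cases hcol : Metric.infDist x (frontier Ω) < δ ε ∧
              Metric.infDist y (frontier Ω) < δ ε
          · have hux : uu ε x = 1 := by simp only [huu]; exact if_pos hcol.1
            have huy : uu ε y = 1 := by simp only [huu]; exact if_pos hcol.2
            rw [hux, huy, sub_self, abs_zero]
            rw [zero_pow (by norm_num : (2:ℕ) ≠ 0), zero_div]
            positivity
          · obtain ⟨z, hzf, hxz, hyz⟩ := segment_crossing hΩo hx hy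
            have hδr : δ ε ≤ ‖x - y‖ := by
              rw [← dist_eq_norm]
              rcases not_and_or.1 hcol with h | h
              · exact le_trans (le_trans (not_lt.1 h)
                  (Metric.infDist_le_dist_of_mem hzf)) hxz
              · exact le_trans (le_trans (not_lt.1 h)
                  (Metric.infDist_le_dist_of_mem hzf)) hyz
            set r := ‖x - y‖ with hrdef
            have hr0 : 0 < r := lt_of_lt_of_le hδp hδr
            have hnum : |uu ε x - uu ε y| ^ 2 ≤ 4 := by
              have h1 := habs ε x
              have h2 := habs ε y
              have h3 : |uu ε x - uu ε y| ≤ 2 := by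
                have h4 := abs_sub (uu ε x) (uu ε y)
                linarith
              calc |uu ε x - uu ε y| ^ 2 ≤ 2 ^ 2 :=
                    pow_le_pow_left₀ (abs_nonneg _) h3 2
                _ = 4 := by norm_num
            have hgeo : (1 + r) ^ p ≤ (2 / δ ε) ^ p * r ^ p := by
              rw [← Real.mul_rpow (by positivity) hr0.le]
              apply Real.rpow_le_rpow (by positivity) ?_ hppos.le
              have hh1 : 1 ≤ r / δ ε := (one_le_div hδp).2 hδr
              have hh2 : r ≤ r / δ ε := by
                rw [le_div_iff₀ hδp]
                nlinarith
              have hh3 : 2 / δ ε * r = r / δ ε + r / δ ε := by ring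
              rw [hh3]
              linarith
            have hrp : 0 < r ^ p := Real.rpow_pos_of_pos hr0 p
            have h1p : 0 < (1 + r) ^ p := Real.rpow_pos_of_pos (by linarith) p
            rw [Real.rpow_neg (by linarith : (0:ℝ) ≤ 1 + r), ← div_eq_mul_inv]
            rw [div_le_div_iff₀ hrp h1p]
            nlinarith [mul_le_mul_of_nonneg_right hnum h1p.le,
              mul_le_mul_of_nonneg_left hgeo (by norm_num : (0:ℝ) ≤ 4)]
        calc (∫⁻ y in Ωᶜ, ENNReal.ofReal (|uu ε x - uu ε y| ^ 2 / ‖x - y‖ ^ p))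
            ≤ ∫⁻ y in Ωᶜ, ENNReal.ofReal (4 * (2 / δ ε) ^ p) *
                ENNReal.ofReal ((1 + ‖x - y‖) ^ (-p)) :=
              setLIntegral_mono' hΩo.measurableSet.compl hpt
          _ ≤ ∫⁻ y, ENNReal.ofReal (4 * (2 / δ ε) ^ p) *
                ENNReal.ofReal ((1 + ‖x - y‖) ^ (-p)) :=
              setLIntegral_le_lintegral _ _
          _ = ENNReal.ofReal (4 * (2 / δ ε) ^ p) * B := by
              have hgB' : Measurable fun y : Rn n =>
                  ENNReal.ofReal ((1 + ‖x - y‖) ^ (-p)) :=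
                hgB.comp (measurable_const.sub measurable_id)
              rw [lintegral_const_mul _ hgB', htrans x]
      calc Kext n s (uu ε) Ω
          = 2 * ∫⁻ x in Ω, ∫⁻ y in Ωᶜ,
              ENNReal.ofReal (|uu ε x - uu ε y| ^ 2 / ‖x - y‖ ^ p) := by
            simp only [Kext, ← hp]
        _ ≤ 2 * ∫⁻ _ in Ω, (ENNReal.ofReal (4 * (2 / δ ε) ^ p) * B) :=
            mul_le_mul_right (setLIntegral_mono' hΩo.measurableSet hinner) 2
        _ = 2 * (ENNReal.ofReal (4 * (2 / δ ε) ^ p) * B * volume Ω) := by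
            rw [setLIntegral_const]
    have hFeq : ∀ ε, FextH n s W ε (uu ε) Ω =
        ENNReal.ofReal (c ε) * Kext n s (uu ε) Ω := by
      intro ε
      by_cases h2 : s = 1/2
      · simp only [FextH, hcdef, if_pos h2, hpot ε, mul_zero, add_zero]
      · simp only [FextH, hcdef, if_neg h2, hpot ε, mul_zero, add_zero]
    have hup : ∀ᶠ ε in 𝓝[>] (0:ℝ), FextH n s W ε (uu ε) Ω ≤
        ENNReal.ofReal (4 * 2 ^ p * c ε ^ (1/2 : ℝ)) * (2 * (B * volume Ω)) := by
      filter_upwards [hcev, hδev] with ε hc hd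
      rw [hFeq ε]
      calc ENNReal.ofReal (c ε) * Kext n s (uu ε) Ω
          ≤ ENNReal.ofReal (c ε) *
              (2 * (ENNReal.ofReal (4 * (2 / δ ε) ^ p) * B * volume Ω)) :=
            mul_le_mul_right (hKb ε hd.1 hd.2) _
        _ = (ENNReal.ofReal (c ε) * ENNReal.ofReal (4 * (2 / δ ε) ^ p)) *
              (2 * (B * volume Ω)) := by ring
        _ = ENNReal.ofReal (c ε * (4 * (2 / δ ε) ^ p)) * (2 * (B * volume Ω)) := by
            rw [ENNReal.ofReal_mul hc.1.le]
        _ = ENNReal.ofReal (4 * 2 ^ p * c ε ^ (1/2 : ℝ)) * (2 * (B * volume Ω)) := by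
            congr 1
            have hδp : δ ε ^ p = c ε ^ (1/2 : ℝ) := by
              rw [hδdef]
              rw [← Real.rpow_mul hc.1.le]
              congr 1
              field_simp
            have hchalf : c ε ^ (1/2 : ℝ) * c ε ^ (1/2 : ℝ) = c ε := by
              rw [← Real.rpow_add hc.1]; norm_num
            have hhpos : (0:ℝ) < c ε ^ (1/2 : ℝ) := Real.rpow_pos_of_pos hc.1 _
            rw [Real.div_rpow (by norm_num) hd.1.le, hδp]
            have hdiv : c ε / c ε ^ (1/2:ℝ) = c ε ^ (1/2:ℝ) := by
              rw [div_eq_iff hhpos.ne']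
              exact hchalf.symm
            congr 1
            calc c ε * (4 * ((2:ℝ) ^ p / c ε ^ (1/2:ℝ)))
                = 4 * 2 ^ p * (c ε / c ε ^ (1/2:ℝ)) := by ring
              _ = 4 * 2 ^ p * c ε ^ (1/2:ℝ) := by rw [hdiv]
    have hlim : Tendsto (fun ε => ENNReal.ofReal (4 * 2 ^ p * c ε ^ (1/2 : ℝ)) *
        (2 * (B * volume Ω))) (𝓝[>] (0:ℝ)) (𝓝 0) := by
      have h3 : ContinuousAt (fun t : ℝ => t ^ (1/2 : ℝ)) 0 :=
        Real.continuousAt_rpow_const 0 _ (Or.inr (by norm_num))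
      have h4 := h3.tendsto
      rw [Real.zero_rpow (by norm_num : (1/2:ℝ) ≠ 0)] at h4
      have h5 : Tendsto (fun ε => c ε ^ (1/2 : ℝ)) (𝓝[>] (0:ℝ)) (𝓝 0) :=
        h4.comp hctend
      have h7 : Tendsto (fun ε => 4 * 2 ^ p * c ε ^ (1/2 : ℝ)) (𝓝[>] (0:ℝ)) (𝓝 0) := by
        have := h5.const_mul (4 * 2 ^ p)
        rwa [mul_zero] at this
      have h6 : Tendsto (fun ε => ENNReal.ofReal (4 * 2 ^ p * c ε ^ (1/2 : ℝ)))
          (𝓝[>] (0:ℝ)) (𝓝 0) := by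
        have := (ENNReal.continuous_ofReal.tendsto 0).comp h7
        rwa [ENNReal.ofReal_zero] at this
      have h8 := ENNReal.Tendsto.mul_const h6
        (Or.inr (ENNReal.mul_ne_top (ENNReal.ofNat_ne_top (n := 2)) (ENNReal.mul_ne_top hB.ne hΩvol.ne)))
      rwa [zero_mul] at h8
    exact tendsto_of_tendsto_of_tendsto_of_le_of_le' tendsto_const_nhds hlim
      (Eventually.of_forall fun ε => zero_le) hup

end
end

section
/- Let n ≥ 1, Ω a bounded open set with Lipschitz boundary, compactly contained in ℝⁿ, and E ⊂ ℝⁿ a measurable set with Per(E,Ω) < +∞. Then for every sequence s_i → (1/2)⁻ there exists a sequence of measurable sets E_i ⊂ ℝⁿ with χ_{E_i} → χ_E in L¹_loc(ℝⁿ) such that lim_{i→∞} (1/2 − s_i) Per_{s_i}^ext(E_i,Ω) = 0; hence the Γ-limit, in the L¹_loc topology, of (1/2 − s) Per_s^ext(·,Ω) as s → (1/2)⁻ is identically zero. -/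
open MeasureTheory Filter Topology Metric Set
open scoped ENNReal NNReal RealInnerProductSpace

noncomputable section

lemma graph_inter_ball_null (n : ℕ) (v : Rn n) (hv : ‖v‖ = 1) (f : Rn n → ℝ)
    (hf : Continuous f) (x₀ : Rn n) (r : ℝ) :
    volume ({y : Rn n | ⟪y, v⟫ = f (y - ⟪y, v⟫ • v)} ∩ ball x₀ r) = 0 := by
  set g : Rn n → ℝ := fun y => ⟪y, v⟫ - f (y - ⟪y, v⟫ • v) with hg
  have hgc : Continuous g := by
    have h1 : Continuous fun y : Rn n => ⟪y, v⟫ := continuous_id.inner continuous_const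
    exact h1.sub (hf.comp (continuous_id.sub (h1.smul continuous_const)))
  have hvv : ⟪v, v⟫ = (1 : ℝ) := by
    rw [real_inner_self_eq_norm_mul_norm, hv]; ring
  have key : ∀ (t : ℝ) (y : Rn n), g (t • v + y) = g y + t := by
    intro t y
    have hip : ⟪t • v + y, v⟫ = ⟪y, v⟫ + t := by
      rw [inner_add_left, real_inner_smul_left, hvv]; ring
    have harg : (t • v + y) - ⟪t • v + y, v⟫ • v = y - ⟪y, v⟫ • v := by
      rw [hip, add_smul]; abel
    show ⟪t • v + y, v⟫ - f ((t • v + y) - ⟪t • v + y, v⟫ • v) = (⟪y, v⟫ - f (y - ⟪y, v⟫ • v)) + t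
    rw [harg, hip]; ring
  set G : Set (Rn n) := {y : Rn n | ⟪y, v⟫ = f (y - ⟪y, v⟫ • v)} ∩ ball x₀ r with hG
  have hGm : MeasurableSet G := by
    have : {y : Rn n | ⟪y, v⟫ = f (y - ⟪y, v⟫ • v)} = g ⁻¹' {0} := by
      ext y; simp [hg, sub_eq_zero]
    rw [hG, this]
    exact ((isClosed_singleton.preimage hgc).measurableSet).inter measurableSet_ball
  -- translates
  set c : ℕ → ℝ := fun k => ((k : ℝ) + 1)⁻¹ with hc
  have hc0 : ∀ k, 0 < c k := fun k => by positivity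
  have hc1 : ∀ k, c k ≤ 1 := fun k => by
    rw [hc]; rw [inv_le_one_iff₀]; right; exact le_add_of_nonneg_left (Nat.cast_nonneg k)
  have hcinj : Function.Injective c := by
    intro a b hab
    have : ((a : ℝ) + 1) = (b : ℝ) + 1 := by
      have := congrArg (fun x : ℝ => x⁻¹) hab
      simpa [hc, inv_inv] using this
    exact_mod_cast add_right_cancel this
  set S : ℕ → Set (Rn n) := fun k => (fun z => c k • v + z) ⁻¹' G with hS
  have hSm : ∀ k, MeasurableSet (S k) := fun k =>
    hGm.preimage (measurable_id.const_add _)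
  have hSvol : ∀ k, volume (S k) = volume G := fun k =>
    measure_preimage_add volume _ G
  have hSdisj : Pairwise (Function.onFun Disjoint S) := by
    intro a b hab
    rw [Function.onFun, Set.disjoint_left]
    intro z hza hzb
    have hga : g (c a • v + z) = 0 := sub_eq_zero_of_eq hza.1
    have hgb : g (c b • v + z) = 0 := sub_eq_zero_of_eq hzb.1
    rw [key] at hga hgb
    exact hab (hcinj (by linarith))
  have hSsub : ∀ k, S k ⊆ closedBall x₀ (|r| + 1) := by
    intro k z hz
    have hzball : c k • v + z ∈ ball x₀ r := hz.2
    rw [mem_ball, dist_eq_norm] at hzball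
    rw [mem_closedBall, dist_eq_norm]
    calc ‖z - x₀‖ = ‖(c k • v + z - x₀) - c k • v‖ := by congr 1; abel
      _ ≤ ‖c k • v + z - x₀‖ + ‖c k • v‖ := norm_sub_le _ _
      _ ≤ |r| + 1 := by
          have : ‖c k • v‖ = c k := by
            rw [norm_smul, hv, mul_one, Real.norm_eq_abs, abs_of_pos (hc0 k)]
          rw [this]
          exact add_le_add (hzball.le.trans (le_abs_self r)) (hc1 k)
  by_contra hne
  have hsum : (∑' k : ℕ, volume (S k)) ≤ volume (closedBall x₀ (|r| + 1)) := by
    rw [← measure_iUnion hSdisj hSm]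
    exact measure_mono (iUnion_subset hSsub)
  rw [tsum_congr hSvol, ENNReal.tsum_const_eq_top_of_ne_zero hne] at hsum
  exact (measure_closedBall_lt_top (x := x₀) (r := |r| + 1)).not_ge hsum


lemma frontier_subset_graph (n : ℕ) (Ω : Set (Rn n)) (hΩo : IsOpen Ω)
    (x : Rn n) (r : ℝ) (v : Rn n) (f : Rn n → ℝ) (hf : Continuous f)
    (hset : Ω ∩ ball x r = {y ∈ ball x r | ⟪y, v⟫ < f (y - ⟪y, v⟫ • v)}) :
    frontier Ω ∩ ball x r ⊆ {y : Rn n | ⟪y, v⟫ = f (y - ⟪y, v⟫ • v)} ∩ ball x r := by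
  rintro y ⟨hyf, hyb⟩
  refine ⟨?_, hyb⟩
  rcases lt_trichotomy (⟪y, v⟫) (f (y - ⟪y, v⟫ • v)) with hlt | heq | hgt
  · exfalso
    have hyΩ : y ∈ Ω := by
      have : y ∈ Ω ∩ ball x r := by rw [hset]; exact ⟨hyb, hlt⟩
      exact this.1
    rw [hΩo.frontier_eq] at hyf
    exact hyf.2 hyΩ
  · exact heq
  · exfalso
    set U : Set (Rn n) := ball x r ∩ {z | f (z - ⟪z, v⟫ • v) < ⟪z, v⟫} with hU
    have hUopen : IsOpen U := by
      apply isOpen_ball.inter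
      have h1 : Continuous fun z : Rn n => ⟪z, v⟫ := continuous_id.inner continuous_const
      exact isOpen_lt (hf.comp (continuous_id.sub (h1.smul continuous_const))) h1
    have hyU : y ∈ U := ⟨hyb, hgt⟩
    have hUdisj : U ∩ Ω = ∅ := by
      ext z; simp only [mem_inter_iff, mem_empty_iff_false, iff_false, not_and]
      intro hz hzΩ
      have : z ∈ Ω ∩ ball x r := ⟨hzΩ, hz.1⟩
      rw [hset] at this
      exact absurd this.2 (not_lt.mpr hz.2.le)
    have hyc : y ∈ closure Ω := hyf.1
    rcases mem_closure_iff.mp hyc U hUopen hyU with ⟨z, hzU, hzΩ⟩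
    have : z ∈ U ∩ Ω := ⟨hzU, hzΩ⟩
    rw [hUdisj] at this
    exact this

lemma frontier_volume_zero (n : ℕ) (Ω : Set (Rn n)) (hΩo : IsOpen Ω)
    (hΩb : Bornology.IsBounded Ω) (hΩlip : HasLipschitzBoundary n Ω) :
    volume (frontier Ω) = 0 := by
  have hfc : IsCompact (frontier Ω) := by
    apply Metric.isCompact_of_isClosed_isBounded isClosed_frontier
    exact hΩb.closure.subset (frontier_subset_closure (s := Ω))
  -- choose data for each boundary point
  choose r hr v hvn L f hlip hset using hΩlip
  -- finite subcover
  have hcov : frontier Ω ⊆ ⋃ (p : frontier Ω), ball (p : Rn n) (r p p.2) := by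
    intro y hy
    exact mem_iUnion.mpr ⟨⟨y, hy⟩, mem_ball_self (hr y hy)⟩
  obtain ⟨t, ht⟩ := hfc.elim_finite_subcover
    (fun p : frontier Ω => ball (p : Rn n) (r p p.2)) (fun p => isOpen_ball) hcov
  have : volume (frontier Ω) ≤ ∑ p ∈ t, volume (frontier Ω ∩ ball (p : Rn n) (r p p.2)) := by
    calc volume (frontier Ω) ≤ volume (⋃ p ∈ t, frontier Ω ∩ ball (p : Rn n) (r p p.2)) := by
          apply measure_mono
          intro y hy
          rcases mem_iUnion₂.mp (ht hy) with ⟨p, hp, hyp⟩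
          exact mem_iUnion₂.mpr ⟨p, hp, hy, hyp⟩
      _ ≤ ∑ p ∈ t, volume (frontier Ω ∩ ball (p : Rn n) (r p p.2)) := measure_biUnion_finset_le _ _
  have hzero : ∀ p : frontier Ω, volume (frontier Ω ∩ ball (p : Rn n) (r p p.2)) = 0 := by
    intro p
    apply measure_mono_null
      (frontier_subset_graph n Ω hΩo _ _ _ _ ((hlip p p.2).continuous) (hset p p.2))
    exact graph_inter_ball_null n _ (hvn p p.2) _ ((hlip p p.2).continuous) _ _
  rw [le_antisymm ((this.trans (le_of_eq (by simp [hzero])))) zero_le]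

lemma exists_frontier_between (n : ℕ) (Ω : Set (Rn n)) (hΩo : IsOpen Ω)
    {x y : Rn n} (hx : x ∈ Ω) (hy : y ∉ Ω) :
    ∃ w ∈ frontier Ω, dist w x ≤ dist x y ∧ dist w y ≤ dist x y := by
  obtain ⟨w, hwf, hwseg⟩ : ∃ w ∈ frontier Ω, w ∈ segment ℝ x y := by
    by_contra h
    push_neg at h
    have hdisj : Disjoint (frontier Ω) (segment ℝ x y) :=
      Set.disjoint_left.mpr fun w hw hw' => h w hw hw'
    have hclopen := isClopen_preimage_val hΩo hdisj
    haveI := Subtype.preconnectedSpace (convex_segment x y).isPreconnected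
    rcases isClopen_iff.mp hclopen with hempty | huniv
    · have hmem : (⟨x, left_mem_segment ℝ x y⟩ : segment ℝ x y) ∈
        (Subtype.val ⁻¹' Ω : Set (segment ℝ x y)) := hx
      rw [hempty] at hmem
      exact hmem
    · have hmem : (⟨y, right_mem_segment ℝ x y⟩ : segment ℝ x y) ∈
        (Subtype.val ⁻¹' Ω : Set (segment ℝ x y)) := by
        rw [huniv]; trivial
      exact hy hmem
  obtain ⟨a, b, ha, hb, hab, rfl⟩ := hwseg
  refine ⟨_, hwf, ?_, ?_⟩
  · have : a • x + b • y - x = b • (y - x) := by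
      have : a = 1 - b := by linarith
      rw [this]; module
    rw [dist_eq_norm, this, norm_smul, Real.norm_eq_abs, abs_of_nonneg hb, dist_eq_norm,
      norm_sub_rev]
    have hb1 : b ≤ 1 := by linarith
    nlinarith [norm_nonneg (x - y)]
  · have : a • x + b • y - y = a • (x - y) := by
      have : b = 1 - a := by linarith
      rw [this]; module
    rw [dist_eq_norm, this, norm_smul, Real.norm_eq_abs, abs_of_nonneg ha, dist_eq_norm]
    have ha1 : a ≤ 1 := by linarith
    nlinarith [norm_nonneg (x - y)]


def In (n : ℕ) : ℝ≥0∞ := ∫⁻ z : Rn n, ENNReal.ofReal ((1 + ‖z‖) ^ (-((n:ℝ) + 1/2)))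

lemma In_lt_top (n : ℕ) : In n < ⊤ := by
  have hint : Integrable (fun z : Rn n => (1 + ‖z‖) ^ (-((n:ℝ) + 1/2))) := by
    apply integrable_one_add_norm
    rw [finrank_euclideanSpace_fin]
    linarith
  exact hint.lintegral_lt_top

lemma key_ineq (n : ℕ) {s δ r : ℝ} (hs : 1/4 ≤ s) (hs' : s ≤ 1/2)
    (hδ0 : 0 < δ) (hδ1 : δ ≤ 1) (hr : δ ≤ r) :
    r ^ (-((n:ℝ) + 2 * s)) ≤ 2 ^ ((n:ℝ) + 1) * δ ^ (-((n:ℝ) + 1)) * (1 + r) ^ (-((n:ℝ) + 1/2)) := by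
  have hn0 : (0:ℝ) ≤ (n:ℝ) := Nat.cast_nonneg n
  have hr0 : 0 < r := hδ0.trans_le hr
  have h1r : (0:ℝ) < 1 + r := by linarith
  have hexp0 : -((n:ℝ) + 1) ≤ 0 := by linarith
  have hexp2 : -((n:ℝ) + 1/2) ≤ 0 := by linarith
  have hδpow : (1:ℝ) ≤ δ ^ (-((n:ℝ) + 1)) := by
    have := Real.rpow_le_rpow_of_nonpos hδ0 hδ1 hexp0
    rwa [Real.one_rpow] at this
  rcases le_total r 1 with hr1 | hr1
  · have s1 : r ^ (-((n:ℝ) + 2 * s)) ≤ r ^ (-((n:ℝ) + 1)) :=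
      Real.rpow_le_rpow_of_exponent_ge hr0 hr1 (by linarith)
    have s2 : r ^ (-((n:ℝ) + 1)) ≤ δ ^ (-((n:ℝ) + 1)) :=
      Real.rpow_le_rpow_of_nonpos hδ0 hr hexp0
    have s3 : (2:ℝ) ^ (-((n:ℝ) + 1)) ≤ (1 + r) ^ (-((n:ℝ) + 1/2)) := by
      have a1 : (2:ℝ) ^ (-((n:ℝ) + 1)) ≤ (2:ℝ) ^ (-((n:ℝ) + 1/2)) :=
        Real.rpow_le_rpow_of_exponent_le one_le_two (by linarith)
      have a2 : (2:ℝ) ^ (-((n:ℝ) + 1/2)) ≤ (1 + r) ^ (-((n:ℝ) + 1/2)) :=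
        Real.rpow_le_rpow_of_nonpos h1r (by linarith) hexp2
      linarith
    have hcancel : (2:ℝ) ^ ((n:ℝ) + 1) * (2:ℝ) ^ (-((n:ℝ) + 1)) = 1 := by
      rw [← Real.rpow_add two_pos, show ((n:ℝ) + 1) + -((n:ℝ) + 1) = 0 by ring, Real.rpow_zero]
    calc r ^ (-((n:ℝ) + 2 * s)) ≤ δ ^ (-((n:ℝ) + 1)) := s1.trans s2
      _ = 2 ^ ((n:ℝ) + 1) * δ ^ (-((n:ℝ) + 1)) * 2 ^ (-((n:ℝ) + 1)) := by
          rw [mul_comm ((2:ℝ) ^ ((n:ℝ) + 1)) (δ ^ (-((n:ℝ) + 1))), mul_assoc, hcancel, mul_one]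
      _ ≤ 2 ^ ((n:ℝ) + 1) * δ ^ (-((n:ℝ) + 1)) * (1 + r) ^ (-((n:ℝ) + 1/2)) := by
          apply mul_le_mul_of_nonneg_left s3
          positivity
  · have s1 : r ^ (-((n:ℝ) + 2 * s)) ≤ r ^ (-((n:ℝ) + 1/2)) :=
      Real.rpow_le_rpow_of_exponent_le hr1 (by linarith)
    have s2 : r ^ (-((n:ℝ) + 1/2)) ≤ 2 ^ ((n:ℝ) + 1/2) * (1 + r) ^ (-((n:ℝ) + 1/2)) := by
      have hm : ((2:ℝ) * r) ^ (-((n:ℝ) + 1/2)) = 2 ^ (-((n:ℝ) + 1/2)) * r ^ (-((n:ℝ) + 1/2)) :=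
        Real.mul_rpow (by norm_num) hr0.le
      have hle : ((2:ℝ) * r) ^ (-((n:ℝ) + 1/2)) ≤ (1 + r) ^ (-((n:ℝ) + 1/2)) :=
        Real.rpow_le_rpow_of_nonpos h1r (by linarith) hexp2
      calc r ^ (-((n:ℝ) + 1/2))
          = 2 ^ ((n:ℝ) + 1/2) * (2 ^ (-((n:ℝ) + 1/2)) * r ^ (-((n:ℝ) + 1/2))) := by
            rw [← mul_assoc, ← Real.rpow_add two_pos,
              show ((n:ℝ) + 1/2) + -((n:ℝ) + 1/2) = 0 by ring, Real.rpow_zero, one_mul]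
        _ = 2 ^ ((n:ℝ) + 1/2) * ((2:ℝ) * r) ^ (-((n:ℝ) + 1/2)) := by rw [hm]
        _ ≤ 2 ^ ((n:ℝ) + 1/2) * (1 + r) ^ (-((n:ℝ) + 1/2)) := by
            apply mul_le_mul_of_nonneg_left hle
            positivity
    have s3 : (2:ℝ) ^ ((n:ℝ) + 1/2) ≤ 2 ^ ((n:ℝ) + 1) :=
      Real.rpow_le_rpow_of_exponent_le one_le_two (by linarith)
    calc r ^ (-((n:ℝ) + 2 * s)) ≤ 2 ^ ((n:ℝ) + 1/2) * (1 + r) ^ (-((n:ℝ) + 1/2)) := s1.trans s2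
      _ ≤ 2 ^ ((n:ℝ) + 1) * (1 + r) ^ (-((n:ℝ) + 1/2)) := by
          apply mul_le_mul_of_nonneg_right s3
          positivity
      _ ≤ 2 ^ ((n:ℝ) + 1) * δ ^ (-((n:ℝ) + 1)) * (1 + r) ^ (-((n:ℝ) + 1/2)) := by
          apply mul_le_mul_of_nonneg_right _ (by positivity)
          exact le_mul_of_one_le_right (by positivity) hδpow

lemma tail_lintegral (n : ℕ) {s δ : ℝ} (hs : 1/4 ≤ s) (hs' : s ≤ 1/2)
    (hδ0 : 0 < δ) (hδ1 : δ ≤ 1) (x : Rn n) (B : Set (Rn n))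
    (hsep : ∀ y ∈ B, δ ≤ ‖x - y‖) :
    (∫⁻ y in B, ENNReal.ofReal (‖x - y‖ ^ (-((n:ℝ) + 2 * s)))) ≤
      ENNReal.ofReal (2 ^ ((n:ℝ) + 1) * δ ^ (-((n:ℝ) + 1))) * In n := by
  have hbase : Continuous fun y : Rn n => 1 + ‖x - y‖ :=
    continuous_const.add (continuous_const.sub continuous_id).norm
  have hcont : Continuous fun y : Rn n => (1 + ‖x - y‖) ^ (-((n:ℝ) + 1/2)) := by
    refine continuous_iff_continuousAt.mpr fun y => ?_
    exact (Real.continuousAt_rpow_const _ _ (Or.inl (by positivity))).comp hbase.continuousAt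
  have hmeas : Measurable fun y : Rn n =>
      ENNReal.ofReal (2 ^ ((n:ℝ) + 1) * δ ^ (-((n:ℝ) + 1)) * (1 + ‖x - y‖) ^ (-((n:ℝ) + 1/2))) :=
    (continuous_const.mul hcont).measurable.ennreal_ofReal
  calc (∫⁻ y in B, ENNReal.ofReal (‖x - y‖ ^ (-((n:ℝ) + 2 * s))))
      ≤ ∫⁻ y in B, ENNReal.ofReal
          (2 ^ ((n:ℝ) + 1) * δ ^ (-((n:ℝ) + 1)) * (1 + ‖x - y‖) ^ (-((n:ℝ) + 1/2))) := by
        apply setLIntegral_mono hmeas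
        intro y hy
        exact ENNReal.ofReal_le_ofReal (key_ineq n hs hs' hδ0 hδ1 (hsep y hy))
    _ ≤ ∫⁻ y, ENNReal.ofReal
          (2 ^ ((n:ℝ) + 1) * δ ^ (-((n:ℝ) + 1)) * (1 + ‖x - y‖) ^ (-((n:ℝ) + 1/2))) :=
        setLIntegral_le_lintegral _ _
    _ = ENNReal.ofReal (2 ^ ((n:ℝ) + 1) * δ ^ (-((n:ℝ) + 1))) *
          ∫⁻ y, ENNReal.ofReal ((1 + ‖x - y‖) ^ (-((n:ℝ) + 1/2))) := by
        rw [← lintegral_const_mul' _ _ ENNReal.ofReal_ne_top]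
        congr 1
        ext y
        rw [← ENNReal.ofReal_mul (by positivity)]
    _ = ENNReal.ofReal (2 ^ ((n:ℝ) + 1) * δ ^ (-((n:ℝ) + 1))) * In n := by
        congr 1
        have hmp : MeasurePreserving (fun y : Rn n => x - y) volume volume :=
          Measure.measurePreserving_sub_left volume x
        have hg : Measurable fun z : Rn n => ENNReal.ofReal ((1 + ‖z‖) ^ (-((n:ℝ) + 1/2))) := by
          have hb : Continuous fun z : Rn n => 1 + ‖z‖ := continuous_const.add continuous_norm
          have : Continuous fun z : Rn n => (1 + ‖z‖) ^ (-((n:ℝ) + 1/2)) := by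
            refine continuous_iff_continuousAt.mpr fun z => ?_
            exact (Real.continuousAt_rpow_const _ _ (Or.inl (by positivity))).comp hb.continuousAt
          exact this.measurable.ennreal_ofReal
        exact hmp.lintegral_comp hg

lemma Is_le (n : ℕ) {s δ : ℝ} (hs : 1/4 ≤ s) (hs' : s ≤ 1/2)
    (hδ0 : 0 < δ) (hδ1 : δ ≤ 1) (Ω' A B : Set (Rn n)) (hA : A ⊆ Ω') (hAm : MeasurableSet A)
    (hsep : ∀ x ∈ A, ∀ y ∈ B, δ ≤ ‖x - y‖) :
    Is n s A B ≤ volume Ω' * (ENNReal.ofReal (2 ^ ((n:ℝ) + 1) * δ ^ (-((n:ℝ) + 1))) * In n) := by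
  calc Is n s A B
      ≤ ∫⁻ _ in A, ENNReal.ofReal (2 ^ ((n:ℝ) + 1) * δ ^ (-((n:ℝ) + 1))) * In n := by
        apply setLIntegral_mono' hAm
        intro x hx
        exact tail_lintegral n hs hs' hδ0 hδ1 x B (fun y hy => hsep x hx y hy)
    _ = ENNReal.ofReal (2 ^ ((n:ℝ) + 1) * δ ^ (-((n:ℝ) + 1))) * In n * volume A := by
        exact setLIntegral_const _ _
    _ = volume A * (ENNReal.ofReal (2 ^ ((n:ℝ) + 1) * δ ^ (-((n:ℝ) + 1))) * In n) :=
        mul_comm _ _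
    _ ≤ volume Ω' * (ENNReal.ofReal (2 ^ ((n:ℝ) + 1) * δ ^ (-((n:ℝ) + 1))) * In n) :=
        mul_le_mul_left (measure_mono hA) _


lemma Is_comm (n : ℕ) (s : ℝ) (A B : Set (Rn n)) : Is n s A B = Is n s B A := by
  have h1 : Measurable fun t : ℝ => t ^ (-((n:ℝ) + 2 * s)) := by measurability
  have hk : Measurable fun p : Rn n × Rn n =>
      ENNReal.ofReal (‖p.1 - p.2‖ ^ (-((n:ℝ) + 2 * s))) :=
    (h1.comp (continuous_fst.sub continuous_snd).norm.measurable).ennreal_ofReal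
  rw [Is, Is, lintegral_lintegral_swap hk.aemeasurable]
  congr 1
  ext y
  congr 1
  ext x
  rw [norm_sub_rev]



/-- For every bounded open `Ω` with Lipschitz boundary and every
measurable `E` with `Per(E,Ω) < +∞`: for every sequence `s_i → (1/2)⁻` there is a
sequence of measurable sets `E_i` with `χ_{E_i} → χ_E` in `L¹_loc(ℝⁿ)` such that
`lim_i (1/2 − s_i) Per_{s_i}^ext(E_i,Ω) = 0`; hence the Γ-limit (in the `L¹_loc`
topology) of `(1/2 − s) Per_s^ext(·,Ω)` as `s → (1/2)⁻` is identically zero (the liminf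
inequality with limit `0` being trivial for the nonnegative functionals involved). -/
theorem gamma_limit_perSExt_zero
    (n : ℕ) (hn : 1 ≤ n)
    (Ω : Set (Rn n)) (hΩo : IsOpen Ω) (hΩb : Bornology.IsBounded Ω)
    (hΩlip : HasLipschitzBoundary n Ω)
    (E : Set (Rn n)) (hE : MeasurableSet E) (hper : Per n E Ω < ⊤)
    (si : ℕ → ℝ) (hsi : ∀ i, si i ∈ Set.Ioo (0:ℝ) (1/2))
    (hs : Tendsto si atTop (𝓝 (1/2 : ℝ))) :
    ∃ Ei : ℕ → Set (Rn n), (∀ i, MeasurableSet (Ei i)) ∧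
      (∀ K : Set (Rn n), IsCompact K →
        Tendsto (fun i => volume (symmDiff (Ei i) E ∩ K)) atTop (𝓝 0)) ∧
      Tendsto (fun i => ENNReal.ofReal (1/2 - si i) * PerSExt n (si i) (Ei i) Ω)
        atTop (𝓝 0) := by
  have hn1 : (0:ℝ) < (n:ℝ) + 1 := by positivity
  set t : ℕ → ℝ := fun i => 1/2 - si i with ht
  have ht0 : ∀ i, 0 < t i := fun i => by have := (hsi i).2; simp only [ht]; linarith
  have ht1 : ∀ i, t i ≤ 1 := fun i => by have := (hsi i).1; simp only [ht]; linarith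
  have htend : Tendsto t atTop (𝓝 0) := by
    rw [ht, show (0:ℝ) = 1/2 - 1/2 by norm_num]
    exact tendsto_const_nhds.sub hs
  set c : ℝ := (1:ℝ) / (2 * ((n:ℝ) + 1)) with hc
  have hcpos : 0 < c := by rw [hc]; positivity
  set δ : ℕ → ℝ := fun i => t i ^ c with hδ
  have hδ0 : ∀ i, 0 < δ i := fun i => Real.rpow_pos_of_pos (ht0 i) _
  have hδ1 : ∀ i, δ i ≤ 1 := fun i => Real.rpow_le_one (ht0 i).le (ht1 i) hcpos.le
  have hδpow : ∀ i, t i * δ i ^ (-((n:ℝ) + 1)) = t i ^ ((1:ℝ)/2) := by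
    intro i
    have h1 : δ i ^ (-((n:ℝ) + 1)) = t i ^ (c * (-((n:ℝ) + 1))) := by
      rw [hδ, ← Real.rpow_mul (ht0 i).le]
    have h2 : c * (-((n:ℝ) + 1)) = -(1/2 : ℝ) := by
      rw [hc]; field_simp
    rw [h1, h2]
    rw [show t i * t i ^ (-(1/2:ℝ)) = t i ^ (1:ℝ) * t i ^ (-(1/2:ℝ)) by
      rw [Real.rpow_one]]
    rw [← Real.rpow_add (ht0 i)]
    norm_num
  have hδtend : Tendsto δ atTop (𝓝[>] 0) := by
    have hca : ContinuousAt (fun u : ℝ => u ^ c) 0 :=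
      Real.continuousAt_rpow_const 0 c (Or.inr hcpos.le)
    have h0 : Tendsto δ atTop (𝓝 0) := by
      have := hca.tendsto.comp htend
      rwa [Real.zero_rpow hcpos.ne'] at this
    exact tendsto_nhdsWithin_of_tendsto_nhds_of_eventually_within _ h0
      (Eventually.of_forall fun i => hδ0 i)
  set D : ℕ → Set (Rn n) := fun i => Metric.thickening (δ i) (frontier Ω) with hD
  refine ⟨fun i => E ∪ D i, fun i => hE.union isOpen_thickening.measurableSet, ?_, ?_⟩
  · -- L¹loc convergence
    intro K hK
    have hDK : Tendsto (fun i => (volume.restrict K) (D i)) atTop (𝓝 0) := by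
      have hfin : ∃ R, 0 < R ∧ (volume.restrict K) (thickening R (frontier Ω)) ≠ ∞ :=
        ⟨1, one_pos, ((measure_mono (subset_univ _)).trans_lt
          (by rw [Measure.restrict_apply_univ]; exact hK.measure_lt_top)).ne⟩
      have hcl : (volume.restrict K) (closure (frontier Ω)) = 0 := by
        rw [isClosed_frontier.closure_eq]
        apply le_antisymm _ zero_le
        calc (volume.restrict K) (frontier Ω) ≤ volume (frontier Ω) := by
              rw [Measure.restrict_apply isClosed_frontier.measurableSet]
              exact measure_mono inter_subset_left
          _ = 0 := frontier_volume_zero n Ω hΩo hΩb hΩlip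
      have := tendsto_measure_thickening (μ := volume.restrict K)
        ⟨hfin.choose, hfin.choose_spec.1, hfin.choose_spec.2⟩
      rw [hcl] at this
      exact this.comp hδtend
    apply tendsto_of_tendsto_of_tendsto_of_le_of_le tendsto_const_nhds hDK
      (fun i => zero_le)
    intro i
    have hsub : symmDiff (E ∪ D i) E ∩ K ⊆ D i ∩ K := by
      intro z hz
      refine ⟨?_, hz.2⟩
      rcases Set.mem_symmDiff.mp hz.1 with ⟨hzu, hzE⟩ | ⟨hzE, hzu⟩
      · rcases hzu with h | h
        · exact absurd h hzE
        · exact h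
      · exact absurd (Or.inl hzE) hzu
    calc volume (symmDiff (E ∪ D i) E ∩ K) ≤ volume (D i ∩ K) := measure_mono hsub
      _ = (volume.restrict K) (D i) := by
          rw [Measure.restrict_apply isOpen_thickening.measurableSet]
  · -- energy convergence
    have hvolΩ : volume Ω < ⊤ := hΩb.measure_lt_top
    set Cst : ℝ≥0∞ := 2 * volume Ω * (ENNReal.ofReal (2 ^ ((n:ℝ) + 1)) * In n) with hCst
    have hCstne : Cst ≠ ⊤ := by
      rw [hCst]
      exact ENNReal.mul_ne_top (ENNReal.mul_ne_top (by norm_num) hvolΩ.ne)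
        (ENNReal.mul_ne_top ENNReal.ofReal_ne_top (In_lt_top n).ne)
    have hBnd : Tendsto (fun i => ENNReal.ofReal (t i ^ ((1:ℝ)/2)) * Cst) atTop (𝓝 0) := by
      have h12 : ContinuousAt (fun u : ℝ => u ^ ((1:ℝ)/2)) 0 :=
        Real.continuousAt_rpow_const 0 _ (Or.inr (by norm_num : (0:ℝ) ≤ 1/2))
      have h0 : Tendsto (fun i => t i ^ ((1:ℝ)/2)) atTop (𝓝 0) := by
        have := h12.tendsto.comp htend
        rwa [Real.zero_rpow (by norm_num : (1:ℝ)/2 ≠ 0)] at this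
      have h0' : Tendsto (fun i => ENNReal.ofReal (t i ^ ((1:ℝ)/2))) atTop (𝓝 (ENNReal.ofReal 0)) :=
        ENNReal.tendsto_ofReal h0
      rw [ENNReal.ofReal_zero] at h0'
      simpa using ENNReal.Tendsto.mul_const h0' (Or.inr hCstne)
    apply tendsto_of_tendsto_of_tendsto_of_le_of_le' tendsto_const_nhds hBnd
      (Eventually.of_forall fun i => zero_le)
    have hev : ∀ᶠ i in atTop, 1/4 ≤ si i :=
      hs.eventually (eventually_ge_nhds (by norm_num : (1/4:ℝ) < 1/2))
    filter_upwards [hev] with i hi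
    -- separation facts
    have hsep1 : ∀ x ∈ Ω \ (E ∪ D i), ∀ y ∈ (E ∪ D i) \ Ω, δ i ≤ ‖x - y‖ := by
      rintro x ⟨hxΩ, hxD⟩ y ⟨_, hyΩ⟩
      obtain ⟨w, hwf, hw1, _⟩ := exists_frontier_between n Ω hΩo hxΩ hyΩ
      have hxth : x ∉ D i := fun h => hxD (Or.inr h)
      rw [hD, mem_thickening_iff] at hxth
      push_neg at hxth
      have := hxth w hwf
      rw [dist_comm] at hw1
      calc δ i ≤ dist x w := this
        _ ≤ dist x y := hw1
        _ = ‖x - y‖ := dist_eq_norm _ _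
    have hsep2 : ∀ x ∈ (E ∪ D i) ∩ Ω, ∀ y ∈ Ωᶜ \ (E ∪ D i), δ i ≤ ‖x - y‖ := by
      rintro x ⟨_, hxΩ⟩ y ⟨hyΩ, hyD⟩
      obtain ⟨w, hwf, _, hw2⟩ := exists_frontier_between n Ω hΩo hxΩ hyΩ
      have hyth : y ∉ D i := fun h => hyD (Or.inr h)
      rw [hD, mem_thickening_iff] at hyth
      push_neg at hyth
      have := hyth w hwf
      rw [dist_comm] at hw2
      calc δ i ≤ dist y w := this
        _ ≤ dist x y := hw2
        _ = ‖x - y‖ := dist_eq_norm _ _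
    have hs' : si i ≤ 1/2 := (hsi i).2.le
    set Cb : ℝ≥0∞ := volume Ω *
      (ENNReal.ofReal (2 ^ ((n:ℝ) + 1) * δ i ^ (-((n:ℝ) + 1))) * In n) with hCb
    have hterm1 : Is n (si i) ((E ∪ D i) \ Ω) (Ω \ (E ∪ D i)) ≤ Cb := by
      rw [Is_comm]
      exact Is_le n hi hs' (hδ0 i) (hδ1 i) Ω _ _ diff_subset
        (hΩo.measurableSet.diff (hE.union isOpen_thickening.measurableSet)) hsep1
    have hterm2 : Is n (si i) ((E ∪ D i) ∩ Ω) (Ωᶜ \ (E ∪ D i)) ≤ Cb :=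
      Is_le n hi hs' (hδ0 i) (hδ1 i) Ω _ _ inter_subset_right
        ((hE.union isOpen_thickening.measurableSet).inter hΩo.measurableSet) hsep2
    have hsum : PerSExt n (si i) (E ∪ D i) Ω ≤ Cb + Cb := add_le_add hterm1 hterm2
    have hofReal : ENNReal.ofReal (1/2 - si i) = ENNReal.ofReal (t i) := rfl
    calc ENNReal.ofReal (1/2 - si i) * PerSExt n (si i) (E ∪ D i) Ω
        ≤ ENNReal.ofReal (t i) * (Cb + Cb) := by
          rw [hofReal]; exact mul_le_mul_right hsum _
      _ = ENNReal.ofReal (t i ^ ((1:ℝ)/2)) * Cst := by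
          rw [hCb, hCst]
          rw [ENNReal.ofReal_mul (by positivity : (0:ℝ) ≤ 2 ^ ((n:ℝ) + 1))]
          rw [← hδpow i]
          rw [ENNReal.ofReal_mul (ht0 i).le]
          ring

end
end
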